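/- arXiv:2311.14072 — 6 statements merged into one kernel-verified Lean document; each statement's English description precedes it below -/
import Mathlib

section
/- The function G_λ satisfies the Lipschitz bound |G_λ(z) − G_λ(w)| ≤ (1/2)|z − w| for all z, w ∈ [0,∞). -/
open Real

noncomputable def Gfun (lam z : ℝ) : ℝ :=
  if z ≤ lam then (Real.sqrt (lam^2 - z^2) - z * Real.arccos (z / lam)) / π else 0

lemma Gfun_inner_deriv (lam : ℝ) (hlam : 0 < lam) {z : ℝ} (hz0 : 0 < z) (hz1 : z < lam) :
    HasDerivAt (fun z => (Real.sqrt (lam^2 - z^2) - z * Real.arccos (z / lam)) / π)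
      (-(Real.arccos (z / lam)) / π) z := by
  have hpos : 0 < lam^2 - z^2 := by nlinarith
  have hsqpos : 0 < Real.sqrt (lam^2 - z^2) := Real.sqrt_pos.mpr hpos
  have h1 : HasDerivAt (fun z : ℝ => lam^2 - z^2) (-(2*z)) z := by
    simpa using ((hasDerivAt_pow 2 z).const_sub (lam^2))
  have hsqrt : HasDerivAt (fun z => Real.sqrt (lam^2 - z^2))
      (1 / (2 * Real.sqrt (lam^2 - z^2)) * (-(2*z))) z :=
    (Real.hasDerivAt_sqrt hpos.ne').comp z h1
  have hx0 : z / lam ≠ -1 := by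
    have : 0 < z / lam := div_pos hz0 hlam
    linarith
  have hx1 : z / lam ≠ 1 := by
    have : z / lam < 1 := (div_lt_one hlam).mpr hz1
    linarith
  have hdiv : HasDerivAt (fun z : ℝ => z / lam) (1 / lam) z := by
    simpa using (hasDerivAt_id z).div_const lam
  have harccos : HasDerivAt (fun z => Real.arccos (z / lam))
      (-(1 / Real.sqrt (1 - (z/lam)^2)) * (1 / lam)) z :=
    HasDerivAt.comp (h₂ := Real.arccos) (h := fun z : ℝ => z / lam) z (Real.hasDerivAt_arccos hx0 hx1) hdiv
  have hprod : HasDerivAt (fun z => z * Real.arccos (z / lam))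
      (1 * Real.arccos (z / lam) + z * (-(1 / Real.sqrt (1 - (z/lam)^2)) * (1 / lam))) z :=
    (hasDerivAt_id z).mul harccos
  have htot := (hsqrt.sub hprod).div_const π
  refine htot.congr_deriv ?_
  have hs : Real.sqrt (1 - (z/lam)^2) = Real.sqrt (lam^2 - z^2) / lam := by
    have h : 1 - (z/lam)^2 = (lam^2 - z^2) / lam^2 := by
      field_simp
    rw [h, Real.sqrt_div hpos.le, Real.sqrt_sq hlam.le]
  rw [hs]
  have hlam' : lam ≠ 0 := hlam.ne'
  field_simp
  ring

lemma Gfun_eq (lam : ℝ) {z : ℝ} (hz : z ≤ lam) :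
    Gfun lam z = (Real.sqrt (lam^2 - z^2) - z * Real.arccos (z / lam)) / π := if_pos hz

lemma Gfun_cont (lam : ℝ) :
    Continuous (fun z => (Real.sqrt (lam^2 - z^2) - z * Real.arccos (z / lam)) / π) := by
  have h1 : Continuous fun z : ℝ => Real.sqrt (lam^2 - z^2) :=
    Real.continuous_sqrt.comp (by continuity)
  have h2 : Continuous fun z : ℝ => Real.arccos (z / lam) :=
    Real.continuous_arccos.comp (by continuity)
  exact (h1.sub (continuous_id.mul h2)).div_const π

lemma Gfun_lam (lam : ℝ) (hlam : 0 < lam) : Gfun lam lam = 0 := by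
  rw [Gfun_eq lam le_rfl]
  rw [div_self hlam.ne', Real.arccos_one, sub_self, Real.sqrt_zero]
  simp

lemma Gfun_anti (lam : ℝ) (hlam : 0 < lam) :
    AntitoneOn (Gfun lam) (Set.Icc 0 lam) := by
  have h : AntitoneOn (fun z => (Real.sqrt (lam^2 - z^2) - z * Real.arccos (z / lam)) / π)
      (Set.Icc 0 lam) := by
    apply antitoneOn_of_deriv_nonpos (convex_Icc 0 lam) (Gfun_cont lam).continuousOn
    · rw [interior_Icc]
      intro x hx
      exact (Gfun_inner_deriv lam hlam hx.1 hx.2).differentiableAt.differentiableWithinAt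
    · rw [interior_Icc]
      intro x hx
      rw [(Gfun_inner_deriv lam hlam hx.1 hx.2).deriv]
      apply div_nonpos_of_nonpos_of_nonneg
      · simpa using Real.arccos_nonneg _
      · exact Real.pi_pos.le
  intro a ha b hb hab
  rw [Gfun_eq lam ha.2, Gfun_eq lam hb.2]
  exact h ha hb hab

lemma Gfun_mono (lam : ℝ) (hlam : 0 < lam) :
    MonotoneOn (fun z => Gfun lam z + z / 2) (Set.Icc 0 lam) := by
  have h : MonotoneOn (fun z => (Real.sqrt (lam^2 - z^2) - z * Real.arccos (z / lam)) / π + z / 2)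
      (Set.Icc 0 lam) := by
    apply monotoneOn_of_deriv_nonneg (convex_Icc 0 lam)
      (((Gfun_cont lam).add (continuous_id.div_const 2)).continuousOn)
    · rw [interior_Icc]
      intro x hx
      exact (((Gfun_inner_deriv lam hlam hx.1 hx.2).add
        ((hasDerivAt_id x).div_const 2)).differentiableAt).differentiableWithinAt
    · rw [interior_Icc]
      intro x hx
      rw [((Gfun_inner_deriv lam hlam hx.1 hx.2).add
        ((hasDerivAt_id x).div_const 2)).deriv]
      have harc : Real.arccos (x / lam) ≤ π / 2 := by
        rw [Real.arccos_le_pi_div_two]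
        exact div_nonneg hx.1.le hlam.le
      have hpi : (0:ℝ) < π := Real.pi_pos
      have h1 : Real.arccos (x / lam) / π ≤ (π / 2) / π :=
        (div_le_div_iff_of_pos_right hpi).mpr harc
      have h2 : (π / 2) / π = 1 / 2 := by field_simp
      rw [neg_div]
      linarith
  intro a ha b hb hab
  simp only
  rw [Gfun_eq lam ha.2, Gfun_eq lam hb.2]
  exact h ha hb hab

theorem Gfun_lipschitz (lam : ℝ) (hlam : 0 < lam) :
    ∀ z ∈ Set.Ici (0:ℝ), ∀ w ∈ Set.Ici (0:ℝ),
      |Gfun lam z - Gfun lam w| ≤ (1/2) * |z - w| := by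
  -- first, the key one-sided lemma
  have key : ∀ z w : ℝ, 0 ≤ z → z ≤ w → |Gfun lam z - Gfun lam w| ≤ (1/2) * (w - z) := by
    intro z w hz hzw
    have hlip : ∀ a b : ℝ, 0 ≤ a → a ≤ b → b ≤ lam →
        |Gfun lam a - Gfun lam b| ≤ (1/2) * (b - a) := by
      intro a b ha hab hb
      have ha' : a ∈ Set.Icc (0:ℝ) lam := ⟨ha, hab.trans hb⟩
      have hb' : b ∈ Set.Icc (0:ℝ) lam := ⟨ha.trans hab, hb⟩
      have h1 : Gfun lam b ≤ Gfun lam a := Gfun_anti lam hlam ha' hb' hab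
      have h2 : Gfun lam a + a / 2 ≤ Gfun lam b + b / 2 := Gfun_mono lam hlam ha' hb' hab
      rw [abs_of_nonneg (by linarith)]
      linarith
    by_cases hw : w ≤ lam
    · exact hlip z w hz hzw hw
    · push_neg at hw
      have hGw : Gfun lam w = 0 := if_neg (not_le.mpr hw)
      by_cases hzl : z ≤ lam
      · have := hlip z lam hz hzl le_rfl
        rw [Gfun_lam lam hlam] at this
        rw [hGw]
        calc |Gfun lam z - 0| ≤ (1/2) * (lam - z) := this
          _ ≤ (1/2) * (w - z) := by linarith
      · push_neg at hzl
        have hGz : Gfun lam z = 0 := if_neg (not_le.mpr hzl)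
        rw [hGz, hGw]
        simp
        linarith
  intro z hz w hw
  rcases le_total z w with h | h
  · rw [show |z - w| = w - z by rw [abs_of_nonpos (by linarith), neg_sub]]
    exact key z w hz h
  · rw [show |z - w| = z - w from abs_of_nonneg (by linarith), abs_sub_comm]
    exact key w z hw h
end

section
/- Let λ > 0 and β ∈ [0,λ]. Then ∫_β^λ G_λ(z) dz ≤ (2/5)(λ − β) G_λ(β). -/
open Real

lemma nonneg_of_hasDerivAt_nonneg {a b : ℝ} {f f' : ℝ → ℝ}
    (hcont : ContinuousOn f (Set.Icc a b))
    (hf : ∀ x ∈ Set.Ioo a b, HasDerivAt f (f' x) x)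
    (h0 : ∀ x ∈ Set.Ioo a b, 0 ≤ f' x) (hfa : f a = 0) :
    ∀ x ∈ Set.Icc a b, 0 ≤ f x := by
  have hmono : MonotoneOn f (Set.Icc a b) := by
    apply monotoneOn_of_deriv_nonneg (convex_Icc a b) hcont
    · intro x hx; rw [interior_Icc] at hx
      exact (hf x hx).differentiableAt.differentiableWithinAt
    · intro x hx; rw [interior_Icc] at hx
      rw [(hf x hx).deriv]; exact h0 x hx
  intro x hx
  have ha : a ∈ Set.Icc a b := Set.left_mem_Icc.2 (hx.1.trans hx.2)
  have := hmono ha hx hx.1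
  linarith [hfa ▸ this]

lemma cusa {θ : ℝ} (h : θ ∈ Set.Icc 0 (π/2)) : 3 * Real.sin θ ≤ θ * (2 + Real.cos θ) := by
  have hg2 : ∀ x ∈ Set.Icc 0 (π/2), 0 ≤ Real.sin x - x * Real.cos x := by
    apply nonneg_of_hasDerivAt_nonneg (f' := fun x => x * Real.sin x)
    · fun_prop
    · intro x hx
      have := (Real.hasDerivAt_sin x).sub ((hasDerivAt_id x).mul (Real.hasDerivAt_cos x))
      exact this.congr_deriv (by simp only [id_eq]; ring)
    · intro x hx
      exact mul_nonneg hx.1.le (Real.sin_nonneg_of_nonneg_of_le_pi hx.1.le (by linarith [Real.pi_pos, hx.2.le]))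
    · simp
  have hg1 : ∀ x ∈ Set.Icc 0 (π/2), 0 ≤ 2 - 2 * Real.cos x - x * Real.sin x := by
    apply nonneg_of_hasDerivAt_nonneg (f' := fun x => Real.sin x - x * Real.cos x)
    · fun_prop
    · intro x hx
      have := (((Real.hasDerivAt_cos x).const_mul (2:ℝ)).const_sub (2:ℝ)).sub
        ((hasDerivAt_id x).mul (Real.hasDerivAt_sin x))
      exact this.congr_deriv (by simp only [id_eq]; ring)
    · intro x hx
      exact hg2 x (Set.Ioo_subset_Icc_self hx)
    · simp
  have hg0 : ∀ x ∈ Set.Icc 0 (π/2), 0 ≤ x * (2 + Real.cos x) - 3 * Real.sin x := by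
    apply nonneg_of_hasDerivAt_nonneg (f' := fun x => 2 - 2 * Real.cos x - x * Real.sin x)
    · fun_prop
    · intro x hx
      have := ((hasDerivAt_id x).mul ((Real.hasDerivAt_cos x).const_add (2:ℝ))).sub
        ((Real.hasDerivAt_sin x).const_mul (3:ℝ))
      exact this.congr_deriv (by simp only [id_eq]; ring)
    · intro x hx
      exact hg1 x (Set.Ioo_subset_Icc_self hx)
    · simp
  linarith [hg0 θ h]

lemma nonneg_of_hasDerivAt_nonpos {a b : ℝ} {f f' : ℝ → ℝ}
    (hcont : ContinuousOn f (Set.Icc a b))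
    (hf : ∀ x ∈ Set.Ioo a b, HasDerivAt f (f' x) x)
    (h0 : ∀ x ∈ Set.Ioo a b, f' x ≤ 0) (hfb : f b = 0) :
    ∀ x ∈ Set.Icc a b, 0 ≤ f x := by
  have hanti : AntitoneOn f (Set.Icc a b) := by
    apply antitoneOn_of_deriv_nonpos (convex_Icc a b) hcont
    · intro x hx; rw [interior_Icc] at hx
      exact (hf x hx).differentiableAt.differentiableWithinAt
    · intro x hx; rw [interior_Icc] at hx
      rw [(hf x hx).deriv]; exact h0 x hx
  intro x hx
  have hb : b ∈ Set.Icc a b := Set.right_mem_Icc.2 (hx.1.trans hx.2)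
  have := hanti hx hb hx.2
  linarith [hfb ▸ this]

theorem integral_Gfun_tail_bound (lam β : ℝ) (hlam : 0 < lam) (hβ : β ∈ Set.Icc 0 lam) :
    ∫ z in β..lam, Gfun lam z ≤ (2/5) * (lam - β) * Gfun lam β := by
  have hπ : (0:ℝ) < π := Real.pi_pos
  set g : ℝ → ℝ := fun x => (Real.sqrt (lam^2 - x^2) - x * Real.arccos (x / lam)) / π with hg_def
  have hgcont : Continuous g := ((Real.continuous_sqrt.comp (by fun_prop)).sub
      (continuous_id.mul (Real.continuous_arccos.comp (by fun_prop)))).div_const π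
  have hGcont : Continuous (Gfun lam) := by
    unfold Gfun
    apply Continuous.if_le hgcont continuous_const continuous_id continuous_const
    intro z hz
    simp only [id_eq] at hz
    subst hz
    simp [hg_def, div_self hlam.ne', Real.arccos_one]
  -- FTC derivative of the tail integral
  have hFTC : ∀ x : ℝ, HasDerivAt (fun u => ∫ z in u..lam, Gfun lam z) (-(Gfun lam x)) x := by
    intro x
    exact intervalIntegral.integral_hasDerivAt_left
      (hGcont.intervalIntegrable x lam)
      (hGcont.stronglyMeasurable.stronglyMeasurableAtFilter)
      hGcont.continuousAt
  set F : ℝ → ℝ := fun x => (2/5) * (lam - x) * g x - ∫ z in x..lam, Gfun lam z with hF_def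
  have hFcont : Continuous F := by
    apply ((continuous_const.mul (continuous_const.sub continuous_id)).mul hgcont).sub
    exact continuous_iff_continuousAt.2 fun x => (hFTC x).continuousAt
  have hFlam : F lam = 0 := by
    simp [hF_def, intervalIntegral.integral_same]
  have hFderiv : ∀ x ∈ Set.Ioo 0 lam,
      HasDerivAt F ((-(2/5)) * g x + (2/5) * (lam - x) * (-Real.arccos (x/lam) / π) + Gfun lam x) x := by
    intro x hx
    have hs2 : (0:ℝ) < lam^2 - x^2 := by nlinarith [hx.1, hx.2]
    have hs : 0 < Real.sqrt (lam^2 - x^2) := Real.sqrt_pos.2 hs2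
    have hne1 : x / lam ≠ -1 := by
      have : 0 < x / lam := div_pos hx.1 hlam
      linarith
    have hne2 : x / lam ≠ 1 := by
      have : x / lam < 1 := (div_lt_one hlam).2 hx.2
      linarith
    have h1 : HasDerivAt (fun y : ℝ => lam^2 - y^2) (-(2*x)) x := by
      simpa using (hasDerivAt_pow 2 x).const_sub (lam^2)
    have h2 := h1.sqrt hs2.ne'
    have h3 : HasDerivAt (fun y : ℝ => Real.arccos (y / lam))
        (-(1 / Real.sqrt (1 - (x/lam)^2)) * (1/lam)) x :=
      by have := (Real.hasDerivAt_arccos hne1 hne2).comp x ((hasDerivAt_id x).div_const lam); exact this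
    have h4 := ((hasDerivAt_id x).mul h3)
    have hg' : HasDerivAt g (-Real.arccos (x / lam) / π) x := by
      have h5 := (h2.sub h4).div_const π
      refine h5.congr_deriv ?_
      simp only [id_eq]
      have hsq : Real.sqrt (1 - (x/lam)^2) = Real.sqrt (lam^2 - x^2) / lam := by
        rw [show 1 - (x/lam)^2 = (lam^2 - x^2) / lam^2 by field_simp,
          Real.sqrt_div hs2.le, Real.sqrt_sq hlam.le]
      rw [hsq]
      field_simp
      ring
    have hlin : HasDerivAt (fun y : ℝ => (2/5) * (lam - y)) (-(2/5)) x := by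
      simpa using ((hasDerivAt_id x).const_sub lam).const_mul (2/5 : ℝ)
    have := (hlin.mul hg').sub (hFTC x)
    refine this.congr_deriv ?_
    ring
  have hFderiv_nonpos : ∀ x ∈ Set.Ioo 0 lam,
      (-(2/5)) * g x + (2/5) * (lam - x) * (-Real.arccos (x/lam) / π) + Gfun lam x ≤ 0 := by
    intro x hx
    set A := Real.arccos (x / lam) with hA
    set S := Real.sqrt (lam^2 - x^2) with hS
    have hs2 : (0:ℝ) < lam^2 - x^2 := by nlinarith [hx.1, hx.2]
    have hxl1 : x / lam ≤ 1 := by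
      have : x / lam < 1 := (div_lt_one hlam).2 hx.2
      linarith
    have hxl0 : (0:ℝ) ≤ x / lam := (div_pos hx.1 hlam).le
    have hsq : Real.sqrt (1 - (x/lam)^2) = S / lam := by
      rw [hS, show 1 - (x/lam)^2 = (lam^2 - x^2) / lam^2 by field_simp,
        Real.sqrt_div hs2.le, Real.sqrt_sq hlam.le]
    have hcus := cusa ⟨Real.arccos_nonneg _, Real.arccos_le_pi_div_two.2 hxl0⟩
    rw [Real.sin_arccos, Real.cos_arccos (by linarith) hxl1, hsq, ← hA] at hcus
    have key : 3 * S ≤ A * (2 * lam + x) := by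
      have h2 : 3 * (S / lam) = (3 * S) / lam := by ring
      have h3 : A * (2 + x / lam) = (A * (2 * lam + x)) / lam := by field_simp
      rw [h2, h3, div_le_div_iff_of_pos_right hlam] at hcus
      exact hcus
    have hG : Gfun lam x = (S - x * A) / π := by
      rw [Gfun, if_pos hx.2.le]
    rw [hG, hg_def]
    have heq : (-(2/5)) * ((S - x * A) / π) + (2/5) * (lam - x) * (-A / π) + (S - x * A) / π
        = (3 * S - A * (2 * lam + x)) / (5 * π) := by
      field_simp
      ring
    simp only []
    rw [heq]
    apply div_nonpos_of_nonpos_of_nonneg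
    · linarith
    · positivity
  have hFnonneg := nonneg_of_hasDerivAt_nonpos (a := 0) (b := lam)
    hFcont.continuousOn hFderiv hFderiv_nonpos hFlam β hβ
  have hGβ : Gfun lam β = g β := by
    rw [Gfun, if_pos hβ.2]
  rw [hGβ]
  simp only [hF_def] at hFnonneg
  linarith
end

section
/- The function S(z) := −cot z − (2/3)z + 1/z satisfies S''(z) = 2(1/z³ − cos z / sin³ z) > 0 for all z ∈ (0,π). -/
open Real

noncomputable def Sfun (z : ℝ) : ℝ := -Real.cot z - 2 * z / 3 + 1 / z

private lemma sin_lb' {x : ℝ} (hx : 0 ≤ x) : x - x^3/6 ≤ Real.sin x := by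
  have mono : MonotoneOn (fun x : ℝ => sin x - (x - x^3/6)) (Set.Ici 0) := by
    have hd : ∀ y : ℝ, HasDerivAt (fun x : ℝ => sin x - (x - x^3/6))
        (cos y - (1 - y^2/2)) y := by
      intro y
      have h1 : HasDerivAt (fun x : ℝ => x - x^3/6) (1 - 3*y^2/6) y := by
        exact ((hasDerivAt_id' y).sub (((hasDerivAt_id' y).pow 3).div_const 6)).congr_deriv (by norm_num)
      have := (Real.hasDerivAt_sin y).sub h1
      exact this.congr_deriv (by ring)
    apply monotoneOn_of_deriv_nonneg (convex_Ici 0)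
    · exact (Continuous.continuousOn (by continuity))
    · intro y _; exact (hd y).differentiableAt.differentiableWithinAt
    · intro y _
      rw [(hd y).deriv]
      have := Real.one_sub_sq_div_two_le_cos (x := y)
      linarith
  have h0 : (fun x : ℝ => sin x - (x - x^3/6)) 0 ≤ (fun x : ℝ => sin x - (x - x^3/6)) x :=
    mono (Set.self_mem_Ici) hx hx
  simp at h0; linarith

private lemma cos_ub' {x : ℝ} (hx : 0 ≤ x) : Real.cos x ≤ 1 - x^2/2 + x^4/24 := by
  have mono : MonotoneOn (fun x : ℝ => (1 - x^2/2 + x^4/24) - cos x) (Set.Ici 0) := by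
    have hd : ∀ y : ℝ, HasDerivAt (fun x : ℝ => (1 - x^2/2 + x^4/24) - cos x)
        (sin y - (y - y^3/6)) y := by
      intro y
      have h1 : HasDerivAt (fun x : ℝ => 1 - x^2/2 + x^4/24)
          ((0 - 2*y^1/2) + 4*y^3/24) y := by
        exact (((hasDerivAt_const y (1:ℝ)).sub (((hasDerivAt_id' y).pow 2).div_const 2)).add
          (((hasDerivAt_id' y).pow 4).div_const 24)).congr_deriv (by norm_num)
      have := h1.sub (Real.hasDerivAt_cos y)
      exact this.congr_deriv (by ring)
    apply monotoneOn_of_deriv_nonneg (convex_Ici 0)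
    · exact (Continuous.continuousOn (by continuity))
    · intro y _; exact (hd y).differentiableAt.differentiableWithinAt
    · intro y hy
      rw [(hd y).deriv]
      have := sin_lb' (x := y) (by simpa using interior_subset hy)
      linarith
  have h0 := mono (Set.self_mem_Ici) hx hx
  simp at h0; linarith

private lemma key_ineq {z : ℝ} (h0 : 0 < z) (h1 : z < π/2) :
    z^3 * Real.cos z < Real.sin z ^ 3 := by
  have hz16 : z < 1.6 := lt_of_lt_of_le h1 (by nlinarith [pi_lt_d2])
  have hs := sin_lb' h0.le
  have hc := cos_ub' h0.le
  have hpos : 0 < z - z^3/6 := by nlinarith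
  have h3 : (z - z^3/6)^3 ≤ sin z ^ 3 := pow_le_pow_left₀ hpos.le hs 3
  have hA : z^3 * cos z ≤ z^3 * (1 - z^2/2 + z^4/24) :=
    mul_le_mul_of_nonneg_left hc (pow_pos h0 3).le
  have hB : z^3 * (1 - z^2/2 + z^4/24) < (z - z^3/6)^3 := by
    nlinarith [mul_pos (pow_pos h0 7) (show (0:ℝ) < 9 - z^2 by nlinarith)]
  linarith

private noncomputable def gfun (z : ℝ) : ℝ := 1 / sin z ^ 2 - 2/3 - 1 / z^2

private lemma hasDerivAt_Sfun {z : ℝ} (hs : Real.sin z ≠ 0) (hz : z ≠ 0) :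
    HasDerivAt Sfun (gfun z) z := by
  have h1 : HasDerivAt (fun z : ℝ => cos z / sin z)
      ((-sin z * sin z - cos z * cos z) / (sin z)^2) z :=
    (Real.hasDerivAt_cos z).div (Real.hasDerivAt_sin z) hs
  have h2 : HasDerivAt (fun z : ℝ => 2 * z / 3) (2 * 1 / 3) z :=
    ((hasDerivAt_id z).const_mul 2).div_const 3
  have h3 : HasDerivAt (fun z : ℝ => 1 / z) (-(1 / z^2)) z := by
    simpa using (hasDerivAt_inv hz)
  have h : HasDerivAt (fun z : ℝ => -(cos z / sin z) - 2 * z / 3 + 1 / z)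
      (-((-sin z * sin z - cos z * cos z) / (sin z)^2) - 2 * 1 / 3 + -(1 / z^2)) z :=
    (h1.neg.sub h2).add h3
  have heq : Sfun = fun z : ℝ => -(cos z / sin z) - 2 * z / 3 + 1 / z := by
    funext x; simp [Sfun, Real.cot_eq_cos_div_sin]
  rw [heq]
  convert h using 1
  have hsc := sin_sq_add_cos_sq z
  unfold gfun
  field_simp [gfun]
  nlinarith [sq_nonneg (sin z)]

private lemma hasDerivAt_gfun {z : ℝ} (hs : Real.sin z ≠ 0) (hz : z ≠ 0) :
    HasDerivAt gfun (2 * (1 / z^3 - Real.cos z / Real.sin z ^ 3)) z := by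
  have h1 : HasDerivAt (fun z : ℝ => 1 / sin z ^ 2)
      ((0 * sin z ^ 2 - 1 * (2 * sin z ^ 1 * cos z)) / (sin z ^ 2)^2) z :=
    (hasDerivAt_const z 1).div ((Real.hasDerivAt_sin z).pow 2) (pow_ne_zero 2 hs)
  have h3 : HasDerivAt (fun z : ℝ => 1 / z ^ 2)
      ((0 * z ^ 2 - 1 * (2 * z ^ 1 * 1)) / (z ^ 2)^2) z :=
    (hasDerivAt_const z 1).div ((hasDerivAt_id z).pow 2) (pow_ne_zero 2 hz)
  have h : HasDerivAt gfun _ z := (h1.sub_const (2/3)).sub h3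
  convert h using 1
  field_simp
  ring

theorem Sfun_second_deriv :
    ∀ z ∈ Set.Ioo (0:ℝ) π,
      deriv (deriv Sfun) z = 2 * (1 / z^3 - Real.cos z / (Real.sin z)^3) ∧
        0 < deriv (deriv Sfun) z := by
  intro z hz
  obtain ⟨hz0, hzπ⟩ := hz
  have hsin : 0 < sin z := Real.sin_pos_of_pos_of_lt_pi hz0 hzπ
  have heq : deriv (deriv Sfun) z = 2 * (1 / z^3 - Real.cos z / (Real.sin z)^3) := by
    have hev : deriv Sfun =ᶠ[nhds z] gfun := by
      filter_upwards [Ioo_mem_nhds hz0 hzπ] with y hy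
      exact (hasDerivAt_Sfun (ne_of_gt (Real.sin_pos_of_pos_of_lt_pi hy.1 hy.2))
        (ne_of_gt hy.1)).deriv
    rw [hev.deriv_eq]
    exact (hasDerivAt_gfun hsin.ne' hz0.ne').deriv
  refine ⟨heq, ?_⟩
  rw [heq]
  have hz3 : 0 < z^3 := pow_pos hz0 3
  rcases le_or_gt (cos z) 0 with hc | hc
  · have h1 : cos z / sin z ^ 3 ≤ 0 :=
      div_nonpos_of_nonpos_of_nonneg hc (pow_pos hsin 3).le
    have h2 : 0 < 1 / z^3 := by positivity
    linarith
  · have hlt : z < π/2 := by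
      by_contra h
      push_neg at h
      have := Real.cos_nonpos_of_pi_div_two_le_of_le h (by linarith [Real.pi_pos])
      linarith
    have hkey := key_ineq hz0 hlt
    have : cos z / sin z ^ 3 < 1 / z^3 := by
      rw [div_lt_div_iff₀ (pow_pos hsin 3) hz3]
      linarith
    linarith
end

section
/- The function S(z) := −cot z − (2/3)z + 1/z has exactly one root in the open interval (0,π), and this root is strictly less than 5π/6. -/
open Real Set


lemma sin_cubic_lb : ∀ x : ℝ, 0 ≤ x → x - x^3/6 ≤ Real.sin x := by
  have hmono : MonotoneOn (fun x : ℝ => Real.sin x - x + x^3/6) (Ici 0) := by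
    have hd : ∀ x : ℝ, HasDerivAt (fun x : ℝ => Real.sin x - x + x^3/6)
        (Real.cos x - 1 + x^2/2) x := by
      intro x
      have h1 := (Real.hasDerivAt_sin x).sub (hasDerivAt_id x)
      have h2 := ((hasDerivAt_pow 3 x).div_const 6)
      convert h1.add h2 using 1
      · rfl
      · rfl
      · rfl
      · ring
    apply monotoneOn_of_deriv_nonneg (convex_Ici 0)
    · exact fun x _ => (hd x).continuousAt.continuousWithinAt
    · exact fun x _ => (hd x).differentiableAt.differentiableWithinAt
    · intro x hx
      rw [(hd x).deriv]
      nlinarith [Real.one_sub_sq_div_two_le_cos (x := x)]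
  intro x hx
  have := hmono (self_mem_Ici) hx hx
  simp at this
  linarith

lemma cos_quartic_ub : ∀ x : ℝ, 0 ≤ x → Real.cos x ≤ 1 - x^2/2 + x^4/24 := by
  have hmono : MonotoneOn (fun x : ℝ => 1 - x^2/2 + x^4/24 - Real.cos x) (Ici 0) := by
    have hd : ∀ x : ℝ, HasDerivAt (fun x : ℝ => 1 - x^2/2 + x^4/24 - Real.cos x)
        (Real.sin x - x + x^3/6) x := by
      intro x
      have h1 := ((hasDerivAt_pow 2 x).div_const 2)
      have h2 := ((hasDerivAt_pow 4 x).div_const 24)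
      have h3 := ((hasDerivAt_const x (1:ℝ)).sub h1).add h2
      convert h3.sub (Real.hasDerivAt_cos x) using 1
      · rfl
      · rfl
      · rfl
      · ring
    apply monotoneOn_of_deriv_nonneg (convex_Ici 0)
    · exact fun x _ => (hd x).continuousAt.continuousWithinAt
    · exact fun x _ => (hd x).differentiableAt.differentiableWithinAt
    · intro x hx
      rw [(hd x).deriv]
      have hx0 : (0:ℝ) ≤ x := le_of_lt (by simpa using hx)
      nlinarith [sin_cubic_lb x hx0]
  intro x hx
  have := hmono (self_mem_Ici) hx hx
  simp at this
  linarith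

noncomputable def S1 (z : ℝ) : ℝ := 1/(Real.sin z)^2 - 2/3 - 1/z^2

lemma Sfun_hasDeriv {z : ℝ} (hz : z ∈ Ioo 0 π) : HasDerivAt Sfun (S1 z) z := by
  have hz0 : z ≠ 0 := ne_of_gt hz.1
  have hs : Real.sin z ≠ 0 := ne_of_gt (Real.sin_pos_of_pos_of_lt_pi hz.1 hz.2)
  have hfun : Sfun = fun w => -(Real.cos w / Real.sin w) - 2 * w / 3 + 1/w := by
    funext w; rw [Sfun, Real.cot_eq_cos_div_sin]
  rw [hfun]
  have h1 := ((Real.hasDerivAt_cos z).div (Real.hasDerivAt_sin z) hs).neg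
  have h2 := ((hasDerivAt_id z).const_mul (2:ℝ)).div_const 3
  have h3 := hasDerivAt_inv hz0
  have h4 := (h1.sub h2).add h3
  have hsc := Real.sin_sq_add_cos_sq z
  convert h4 using 1
  · rfl
  · rfl
  · funext w; rw [one_div]; rfl
  · rw [S1]
    field_simp
    ring_nf
    nlinarith [hsc, sq_nonneg z]

lemma S1_hasDeriv {z : ℝ} (hz : z ∈ Ioo 0 π) :
    HasDerivAt S1 (2/z^3 - 2*Real.cos z/(Real.sin z)^3) z := by
  have hz0 : z ≠ 0 := ne_of_gt hz.1
  have hs : Real.sin z ≠ 0 := ne_of_gt (Real.sin_pos_of_pos_of_lt_pi hz.1 hz.2)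
  have hfun : S1 = fun w => ((Real.sin w)^2)⁻¹ - 2/3 - (w^2)⁻¹ := by
    funext w; rw [S1, one_div, one_div]
  rw [hfun]
  have h1 : HasDerivAt (fun w => ((Real.sin w)^2)⁻¹)
      (-(2 * Real.sin z ^ 1 * Real.cos z) / ((Real.sin z)^2)^2) z := by
    exact (((Real.hasDerivAt_sin z).pow 2)).inv (pow_ne_zero 2 hs)
  have h2 : HasDerivAt (fun w : ℝ => (w^2)⁻¹) (-(2 * z ^ 1 * 1) / (z^2)^2) z :=
    ((hasDerivAt_id z).pow 2).inv (pow_ne_zero 2 hz0)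
  have h4 := (h1.sub_const (2/3)).sub h2
  convert h4 using 1
  · rfl
  · rfl
  · rfl
  field_simp
  ring

lemma Sfun_strictConvex : StrictConvexOn ℝ (Ioo 0 π) Sfun := by
  apply strictConvexOn_of_deriv2_pos (convex_Ioo 0 π)
  · exact fun x hx => (Sfun_hasDeriv hx).continuousAt.continuousWithinAt
  · rw [interior_Ioo]
    intro z hz
    have hz0 : (0:ℝ) < z := hz.1
    have hsp : 0 < Real.sin z := Real.sin_pos_of_pos_of_lt_pi hz.1 hz.2
    have heq : deriv (deriv Sfun) z = 2/z^3 - 2*Real.cos z/(Real.sin z)^3 := by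
      have hev : deriv Sfun =ᶠ[nhds z] S1 := by
        filter_upwards [isOpen_Ioo.mem_nhds hz] with w hw
        exact (Sfun_hasDeriv hw).deriv
      rw [Filter.EventuallyEq.deriv_eq hev]
      exact (S1_hasDeriv hz).deriv
    have h2 : deriv^[2] Sfun z = deriv (deriv Sfun) z := by
      simp [Function.iterate_succ, Function.iterate_one]
    rw [h2, heq]
    by_cases hc : Real.cos z ≤ 0
    · have ht1 : (0:ℝ) < 2/z^3 := by positivity
      have ht2 : 2*Real.cos z/(Real.sin z)^3 ≤ 0 :=
        div_nonpos_of_nonpos_of_nonneg (by linarith) (by positivity)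
      linarith
    · push_neg at hc
      have hzlt : z < π/2 := by
        by_contra hge
        push_neg at hge
        exact absurd (Real.cos_nonpos_of_pi_div_two_le_of_le hge (by linarith [hz.2, Real.pi_pos]))
          (not_le.2 hc)
      have hz16 : z < 1.6 := by
        have := Real.pi_lt_d2
        linarith
      -- key inequality: z^3 * cos z < sin z ^ 3
      have hs_ge : z - z^3/6 ≤ Real.sin z := sin_cubic_lb z hz0.le
      have hc_le : Real.cos z ≤ 1 - z^2/2 + z^4/24 := cos_quartic_ub z hz0.le
      have hpos : 0 < z - z^3/6 := by nlinarith
      have hcube : (z - z^3/6)^3 ≤ (Real.sin z)^3 := by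
        apply pow_le_pow_left₀ hpos.le hs_ge
      have hkey : z^3 * Real.cos z < (Real.sin z)^3 := by
        have ha : z^3 * Real.cos z ≤ z^3 * (1 - z^2/2 + z^4/24) :=
          mul_le_mul_of_nonneg_left hc_le (pow_pos hz0 3).le
        have hb : 0 < z^7 * (1/24 - z^2/216) :=
          mul_pos (pow_pos hz0 7) (by nlinarith)
        nlinarith
      rw [sub_pos, div_lt_div_iff₀ (by positivity) (by positivity)]
      nlinarith

lemma Sfun_eq_div {z : ℝ} (hz0 : z ≠ 0) (hs : Real.sin z ≠ 0) :
    Sfun z = (3*Real.sin z - 3*z*Real.cos z - 2*z^2*Real.sin z)/(3*z*Real.sin z) := by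
  rw [Sfun, Real.cot_eq_cos_div_sin]
  field_simp
  ring

lemma Sfun_neg_small {z : ℝ} (hz0 : 0 < z) (hz1 : z ≤ 1/2) : Sfun z < 0 := by
  have hzπ : z < π := by linarith [Real.pi_gt_three]
  have hsp : 0 < Real.sin z := Real.sin_pos_of_pos_of_lt_pi hz0 hzπ
  rw [Sfun_eq_div (ne_of_gt hz0) (ne_of_gt hsp)]
  apply div_neg_of_neg_of_pos _ (by positivity)
  have h1 : Real.sin z ≤ z := Real.sin_le hz0.le
  have h2 : 1 - z^2/2 ≤ Real.cos z := Real.one_sub_sq_div_two_le_cos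
  have h3 : z - z^3/6 ≤ Real.sin z := sin_cubic_lb z hz0.le
  have ha : 3*z*(1 - z^2/2) ≤ 3*z*Real.cos z :=
    mul_le_mul_of_nonneg_left h2 (by linarith)
  have hb : 2*z^2*(z - z^3/6) ≤ 2*z^2*Real.sin z :=
    mul_le_mul_of_nonneg_left h3 (by positivity)
  nlinarith [mul_pos (pow_pos hz0 3) (show (0:ℝ) < 1/2 - z^2/3 by nlinarith)]

lemma Sfun_pos_56 : 0 < Sfun (5*π/6) := by
  have hπ := Real.pi_gt_three
  have hπ' := Real.pi_lt_d2
  have hcot : Real.cot (5*π/6) = -Real.sqrt 3 := by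
    rw [Real.cot_eq_cos_div_sin, show (5*π/6 : ℝ) = π - π/6 by ring,
      Real.cos_pi_sub, Real.sin_pi_sub, Real.cos_pi_div_six, Real.sin_pi_div_six]
    field_simp
  have hs3 : (1.73:ℝ) < Real.sqrt 3 := by
    nlinarith [Real.sq_sqrt (by norm_num : (0:ℝ) ≤ 3), Real.sqrt_nonneg 3]
  have hinv : (0.38:ℝ) < 1/(5*π/6) := by
    rw [lt_div_iff₀ (by positivity)]
    nlinarith
  rw [Sfun, hcot]
  have : 2 * (5*π/6) / 3 < 1.75 := by nlinarith
  linarith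

lemma conv_lt {w p b : ℝ} (hw : w ∈ Ioo 0 π) (hb : b ∈ Ioo 0 π) (h1 : w < p) (h2 : p < b)
    (hSw : Sfun w < 0) (hSb : Sfun b ≤ 0) : Sfun p < 0 := by
  have hwb : w ≠ b := ne_of_lt (h1.trans h2)
  set t : ℝ := (b - p)/(b - w) with ht
  set s : ℝ := (p - w)/(b - w) with hs
  have hbw : (0:ℝ) < b - w := by linarith
  have htpos : 0 < t := div_pos (by linarith) hbw
  have hspos : 0 < s := div_pos (by linarith) hbw
  have hts : t + s = 1 := by
    rw [ht, hs, ← add_div, div_eq_one_iff_eq (ne_of_gt hbw)]; ring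
  have hcomb : t * w + s * b = p := by
    rw [ht, hs]; field_simp; ring
  have h5 := Sfun_strictConvex.2 hw hb hwb htpos hspos hts
  have h6 : Sfun (t * w + s * b) < t * Sfun w + s * Sfun b := by
    simpa [smul_eq_mul] using h5
  rw [hcomb] at h6
  nlinarith

theorem Sfun_unique_root :
    (∃! z : ℝ, z ∈ Set.Ioo 0 π ∧ Sfun z = 0) ∧
      ∀ z ∈ Set.Ioo (0:ℝ) π, Sfun z = 0 → z < 5 * π / 6 := by
  have hπ := Real.pi_gt_three
  have hπ' := Real.pi_lt_d2
  have h56 : (5*π/6 : ℝ) < π := by linarith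
  have hhalf : (1/2 : ℝ) < 5*π/6 := by linarith
  have hsub : Icc (1/2 : ℝ) (5*π/6) ⊆ Ioo 0 π := fun x hx =>
    ⟨by linarith [hx.1], lt_of_le_of_lt hx.2 h56⟩
  have hcont : ContinuousOn Sfun (Icc (1/2 : ℝ) (5*π/6)) := fun x hx =>
    (Sfun_hasDeriv (hsub hx)).continuousAt.continuousWithinAt
  have hivt := intermediate_value_Ioo hhalf.le hcont
  have h0mem : (0:ℝ) ∈ Ioo (Sfun (1/2)) (Sfun (5*π/6)) :=
    ⟨Sfun_neg_small (by norm_num) le_rfl, Sfun_pos_56⟩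
  obtain ⟨z0, hz0mem, hz0⟩ := hivt h0mem
  have hz0Ioo : z0 ∈ Ioo 0 π := ⟨by linarith [hz0mem.1], lt_trans hz0mem.2 h56⟩
  -- no two distinct roots
  have no_two : ∀ a b : ℝ, a ∈ Ioo 0 π → b ∈ Ioo 0 π → a < b →
      Sfun a = 0 → Sfun b = 0 → False := by
    intro a b ha hb hab hSa hSb
    set w := min a (1/2) / 2 with hwdef
    have hw0 : 0 < w := by
      have : 0 < min a (1/2:ℝ) := lt_min ha.1 (by norm_num)
      rw [hwdef]; linarith
    have hwa : w < a := by
      have : min a (1/2) ≤ a := min_le_left _ _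
      have : w ≤ a/2 := by rw [hwdef]; linarith [min_le_left a (1/2:ℝ)]
      linarith
    have hwhalf : w ≤ 1/2 := by
      have := min_le_right a (1/2:ℝ)
      rw [hwdef]; linarith
    have hwI : w ∈ Ioo 0 π := ⟨hw0, by linarith [ha.2]⟩
    have := conv_lt hwI hb hwa hab (Sfun_neg_small hw0 hwhalf) (le_of_eq hSb)
    rw [hSa] at this; exact lt_irrefl 0 this
  constructor
  · refine ⟨z0, ⟨hz0Ioo, hz0⟩, ?_⟩
    intro y ⟨hyIoo, hy⟩
    by_contra hne
    rcases lt_or_gt_of_ne hne with h | h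
    · exact no_two y z0 hyIoo hz0Ioo h hy hz0
    · exact no_two z0 y hz0Ioo hyIoo h hz0 hy
  · intro z hzIoo hz
    by_contra hge
    push_neg at hge
    rcases eq_or_lt_of_le hge with heq | hlt
    · rw [← heq] at hz; linarith [Sfun_pos_56]
    · have hhI : (1/2:ℝ) ∈ Ioo 0 π := ⟨by norm_num, by linarith⟩
      have h56I : (5*π/6:ℝ) ∈ Ioo 0 π := ⟨by linarith, h56⟩
      have := conv_lt hhI hzIoo hhalf hlt (Sfun_neg_small (by norm_num) le_rfl) (le_of_eq hz)
      linarith [Sfun_pos_56]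
end

section
/- Let i, j ∈ ℤ with i < j, let α ∈ [0, 1/2], let n ∈ ℤ, and let g be a decreasing convex function on [i, j+1] satisfying |g(z) − g(w)| ≤ (1/2)|z − w| for all z, w ∈ [i, j+1]. Assume n+1 ≥ g(i+1) ≥ g(j) ≥ n ≥ g(j+1), and that Z := min{z ∈ [i, j+1] : g(z) = n} satisfies Z < j+1. Then ∑_{m=i}^{j−1} (⌊g(m+α) + 1/4⌋ + ⌊g(m+1−α) + 1/4⌋) ≤ 2∫_i^j g(z) dz. -/
open Real

set_option maxHeartbeats 1000000 in
private lemma core_ineq (α k a m : ℝ) (u v M : ℤ)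
    (hα0 : 0 ≤ α) (hα2 : α ≤ 1/2)
    (hk0 : 0 < k) (hk2 : k ≤ 1/2)
    (hu0 : 0 ≤ u) (hu : (u:ℝ) ≤ a - α)
    (hv0 : 0 ≤ v) (hv : (v:ℝ) ≤ a + α)
    (haα : α ≤ a) (hm0 : 0 ≤ m)
    (hM : (M:ℝ) = a + m)
    (hs1 : 3 < 4*k*(m+1))
    (hka : k*(a-1) ≤ 1/4) :
    ∃ b, 0 ≤ b ∧ b ≤ m ∧ ((u:ℝ) + v + 1) ≤ 3/2*(a+b) + k*(a^2 - b^2) := by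
  have ha0 : 0 ≤ a := le_trans hα0 haα
  have h2a : (u:ℝ) + v ≤ 2*a := by linarith
  rcases le_total (3/(4*k)) m with hbm | hbm
  · -- b = 3/(4k)
    refine ⟨3/(4*k), by positivity, hbm, ?_⟩
    set b := 3/(4*k) with hbdef
    have hkb2 : k*b^2 = 3/4*b := by
      rw [hbdef]; field_simp
    have hX : 0 ≤ 16*k*(3/2*a + 3/4*b + k*a^2 - 2*a - 1) := by
      have h12 : 12*(k*b) = 9 := by rw [hbdef]; field_simp; ring
      nlinarith [sq_nonneg (4*k*a - 1), h12, hk2]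
    have hX' : 0 ≤ 3/2*a + 3/4*b + k*a^2 - 2*a - 1 := by
      by_contra hneg
      push_neg at hneg
      nlinarith [mul_pos hk0 (neg_pos.mpr hneg)]
    nlinarith [hX', hkb2, h2a]
  · -- b = m
    refine ⟨m, hm0, le_refl m, ?_⟩
    have hs0 : 4*k*m ≤ 3 := by
      rw [le_div_iff₀ (by positivity : (0:ℝ) < 4*k)] at hbm
      linarith
    rcases le_or_gt k (9/25) with hk25 | hk25
    · -- small k : show RHS ≥ 2a+1
      have hX : 0 ≤ 16*k*(3/2*(a+m) + k*(a^2-m^2) - 2*a - 1) := by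
        nlinarith [sq_nonneg (4*k*a - 1),
          mul_nonneg (by linarith : (0:ℝ) ≤ 3 - 4*k*m) (by linarith : (0:ℝ) ≤ 4*k*(m+1) - 3),
          mul_nonneg hk0.le (by linarith : (0:ℝ) ≤ 4*k*(m+1) - 3),
          mul_nonneg (by linarith : (0:ℝ) ≤ 9/25 - k) hk0.le]
      have hX' : 0 ≤ 3/2*(a+m) + k*(a^2-m^2) - 2*a - 1 := by
        by_contra hneg
        push_neg at hneg
        nlinarith [mul_pos hk0 (neg_pos.mpr hneg)]
      linarith
    · -- big k : case bash on integers
      have hm12 : 1/2 < m := by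
        nlinarith [mul_nonneg (by linarith : (0:ℝ) ≤ 1/2 - k) (by linarith : (0:ℝ) ≤ m + 1)]
      have ha_ub : a ≤ 61/36 := by
        rcases le_or_gt a 1 with h | h
        · linarith
        · nlinarith [mul_pos (by linarith : (0:ℝ) < k - 9/25) (by linarith : (0:ℝ) < a - 1)]
      have hm_ub : m ≤ 75/36 := by
        nlinarith [mul_nonneg (by linarith : (0:ℝ) ≤ k - 9/25) hm0]
      have hu1 : u ≤ 1 := by
        have : (u:ℝ) < 2 := by linarith
        exact_mod_cast Int.lt_add_one_iff.mp (by exact_mod_cast this)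
      have hv2 : v ≤ 2 := by
        have : (v:ℝ) < 3 := by linarith
        exact_mod_cast Int.lt_add_one_iff.mp (by exact_mod_cast this)
      have hM1 : 1 ≤ M := by
        have : (0:ℝ) < M := by rw [hM]; linarith
        exact_mod_cast this
      have hM3 : M ≤ 3 := by
        have : (M:ℝ) < 4 := by rw [hM]; linarith
        exact_mod_cast Int.lt_add_one_iff.mp (by exact_mod_cast this)
      have hka0 : 0 ≤ k*a := mul_nonneg hk0.le ha0
      have hucase : u = 0 ∨ u = 1 := by omega
      have hvcase : v = 0 ∨ v = 1 ∨ v = 2 := by omega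
      have hMcase : M = 1 ∨ M = 2 ∨ M = 3 := by omega
      rcases hMcase with hM' | hM' | hM'
      · -- M = 1
        subst hM'; push_cast at hM
        have ha12 : a < 1/2 := by linarith
        have hu' : u = 0 := by
          have h : (u:ℝ) < 1 := by linarith
          have : u < 1 := by exact_mod_cast h
          omega
        have hv' : v = 0 := by
          have h : (v:ℝ) < 1 := by linarith
          have : v < 1 := by exact_mod_cast h
          omega
        subst hu'; subst hv'; push_cast
        have hkm : k*m = k - k*a := by rw [show m = 1 - a by linarith]; ring
        have hG : k*(a^2 - m^2) = k*a - k*m := by rw [show m = 1 - a by linarith]; ring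
        nlinarith [hG, hkm, hka0, hk2]
      · -- M = 2
        subst hM'; push_cast at hM
        have hkm : k*m = 2*k - k*a := by rw [show m = 2 - a by linarith]; ring
        have hG : k*(a^2 - m^2) = 2*(k*a - k*m) := by rw [show m = 2 - a by linarith]; ring
        rcases hvcase with hv' | hv' | hv'
        · subst hv'
          rcases hucase with hu' | hu' <;> subst hu' <;> push_cast at hu ⊢
          · nlinarith [hG, hs0, hka0]
          · have h : 0 ≤ k*(a-1) := mul_nonneg hk0.le (by linarith)
            nlinarith [hG, hkm, h]
        · subst hv'; push_cast at hv
          have hkv : 0 ≤ k*(a + α - 1) := mul_nonneg hk0.le (by linarith)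
          have hkα : 0 ≤ (1/2 - k)*α := mul_nonneg (by linarith) hα0
          rcases hucase with hu' | hu' <;> subst hu' <;> push_cast at hu ⊢
          · nlinarith [hG, hkm, hkv, hkα, hα2]
          · have h : 0 ≤ k*(a-1) := mul_nonneg hk0.le (by linarith)
            nlinarith [hG, hkm, h]
        · exfalso; subst hv'; push_cast at hv
          linarith
      · -- M = 3
        subst hM'; push_cast at hM
        have hkm : k*m = 3*k - k*a := by rw [show m = 3 - a by linarith]; ring
        have hG : k*(a^2 - m^2) = 3*(k*a - k*m) := by rw [show m = 3 - a by linarith]; ring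
        rcases hvcase with hv' | hv' | hv'
        · subst hv'
          rcases hucase with hu' | hu' <;> subst hu' <;> push_cast at hu ⊢ <;>
            nlinarith [hG, hs0, hka0]
        · subst hv'; push_cast at hv
          rcases hucase with hu' | hu' <;> subst hu' <;> push_cast at hu ⊢
          · nlinarith [hG, hs0, hka0]
          · have h925 : 0 ≤ (k - 9/25)*(a - 1) := mul_nonneg (by linarith) (by linarith)
            nlinarith [hG, hs0, h925, hk25.le, (by linarith : (1:ℝ) ≤ a)]
        · subst hv'; push_cast at hv
          have h : 0 ≤ k*(2*a - 3) := mul_nonneg hk0.le (by linarith)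
          rcases hucase with hu' | hu' <;> subst hu' <;> push_cast at hu ⊢ <;>
            nlinarith [hG, hkm, h]

set_option maxHeartbeats 1000000 in
theorem lattice_count_lemma
    (i j : ℤ) (hij : i < j) (α : ℝ) (hα : α ∈ Set.Icc (0:ℝ) (1/2))
    (n : ℤ) (g : ℝ → ℝ)
    (hanti : AntitoneOn g (Set.Icc (i:ℝ) (j+1)))
    (hconv : ConvexOn ℝ (Set.Icc (i:ℝ) (j+1)) g)
    (hlip : ∀ z ∈ Set.Icc (i:ℝ) (j+1), ∀ w ∈ Set.Icc (i:ℝ) (j+1),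
      |g z - g w| ≤ (1/2) * |z - w|)
    (h1 : g (i+1) ≤ n + 1) (h2 : g (j:ℝ) ≤ g (i+1)) (h3 : (n:ℝ) ≤ g (j:ℝ))
    (h4 : g (j+1) ≤ n)
    (hZ : ∃ z ∈ Set.Ico (i:ℝ) ((j:ℝ)+1), g z = n) :
    ((∑ m ∈ Finset.Icc i (j-1),
        (⌊g ((m:ℝ) + α) + 1/4⌋ + ⌊g ((m:ℝ) + (1 - α)) + 1/4⌋) : ℤ) : ℝ)
      ≤ 2 * ∫ z in (i:ℝ)..(j:ℝ), g z := by
  classical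
  obtain ⟨hα0, hα2⟩ := hα
  obtain ⟨Z, ⟨hZi, hZj⟩, hZn⟩ := hZ
  have hij' : (i:ℝ) + 1 ≤ (j:ℝ) := by exact_mod_cast hij
  have hijR : (i:ℝ) < (j:ℝ) := by linarith
  have hiI : (i:ℝ) ∈ Set.Icc (i:ℝ) ((j:ℝ)+1) := ⟨le_refl _, by linarith⟩
  have hi1I : (i:ℝ)+1 ∈ Set.Icc (i:ℝ) ((j:ℝ)+1) := ⟨by linarith, by linarith⟩
  have hjI : (j:ℝ) ∈ Set.Icc (i:ℝ) ((j:ℝ)+1) := ⟨by linarith, by linarith⟩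
  have hj1I : (j:ℝ)+1 ∈ Set.Icc (i:ℝ) ((j:ℝ)+1) := ⟨by linarith, le_refl _⟩
  have hZI : Z ∈ Set.Icc (i:ℝ) ((j:ℝ)+1) := ⟨hZi, le_of_lt hZj⟩
  have hsubI : Set.Icc (i:ℝ) (j:ℝ) ⊆ Set.Icc (i:ℝ) ((j:ℝ)+1) :=
    Set.Icc_subset_Icc_right (by linarith)
  have hgn : ∀ s ∈ Set.Icc (i:ℝ) (j:ℝ), (n:ℝ) ≤ g s := fun s hs =>
    le_trans h3 (hanti (hsubI hs) hjI hs.2)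
  have hub : ∀ s ∈ Set.Icc (i:ℝ) (j:ℝ), g s ≤ (n:ℝ) + 3/2 := by
    intro s hs
    rcases le_total s ((i:ℝ)+1) with h | h
    · have hl := hlip s (hsubI hs) ((i:ℝ)+1) hi1I
      have habs : |s - ((i:ℝ)+1)| ≤ 1 := abs_le.mpr ⟨by linarith [hs.1], by linarith⟩
      have h5 := (abs_le.mp hl).2
      have h6 : (1:ℝ)/2 * |s - ((i:ℝ)+1)| ≤ 1/2 := by linarith [habs]
      linarith
    · have := hanti hi1I (hsubI hs) h
      linarith
  have hgc : ContinuousOn g (Set.Icc (i:ℝ) ((j:ℝ)+1)) := by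
    have hL : LipschitzOnWith (1/2 : NNReal) g (Set.Icc (i:ℝ) ((j:ℝ)+1)) := by
      rw [lipschitzOnWith_iff_dist_le_mul]
      intro x hx y hy
      have := hlip x hx y hy
      simpa [Real.dist_eq] using this
    exact hL.continuousOn
  have hgInt : ∀ x y : ℝ, x ∈ Set.Icc (i:ℝ) (j:ℝ) → y ∈ Set.Icc (i:ℝ) (j:ℝ) →
      IntervalIntegrable g MeasureTheory.volume x y := by
    intro x y hx hy
    exact ((hgc.mono (subset_trans (Set.uIcc_subset_Icc hx hy) hsubI))).intervalIntegrable
  have hmem1 : ∀ m : ℤ, m ∈ Finset.Icc i (j-1) → ((m:ℝ) + α) ∈ Set.Icc (i:ℝ) (j:ℝ) := by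
    intro m hm
    obtain ⟨h1m, h2m⟩ := Finset.mem_Icc.mp hm
    have h1R : (i:ℝ) ≤ (m:ℝ) := by exact_mod_cast h1m
    have h2R : (m:ℝ) ≤ (j:ℝ) - 1 := by
      have : (m:ℝ) ≤ ((j-1 : ℤ):ℝ) := by exact_mod_cast h2m
      push_cast at this; linarith
    exact ⟨by linarith, by linarith⟩
  have hmem2 : ∀ m : ℤ, m ∈ Finset.Icc i (j-1) → ((m:ℝ) + (1-α)) ∈ Set.Icc (i:ℝ) (j:ℝ) := by
    intro m hm
    obtain ⟨h1m, h2m⟩ := Finset.mem_Icc.mp hm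
    have h1R : (i:ℝ) ≤ (m:ℝ) := by exact_mod_cast h1m
    have h2R : (m:ℝ) ≤ (j:ℝ) - 1 := by
      have : (m:ℝ) ≤ ((j-1 : ℤ):ℝ) := by exact_mod_cast h2m
      push_cast at this; linarith
    exact ⟨by linarith, by linarith⟩
  have hfl : ∀ s : ℝ, s ∈ Set.Icc (i:ℝ) (j:ℝ) →
      ⌊g s + 1/4⌋ = n + (if (n:ℝ) + 3/4 ≤ g s then 1 else 0) := by
    intro s hs
    have hl := hgn s hs
    have hr := hub s hs
    split_ifs with h
    · rw [Int.floor_eq_iff]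
      constructor
      · push_cast; linarith
      · push_cast; linarith
    · push_neg at h
      rw [add_zero, Int.floor_eq_iff]
      constructor
      · push_cast; linarith
      · push_cast; linarith
  set P1 : ℤ → Prop := fun m => (n:ℝ) + 3/4 ≤ g ((m:ℝ) + α) with hP1
  set P2 : ℤ → Prop := fun m => (n:ℝ) + 3/4 ≤ g ((m:ℝ) + (1-α)) with hP2
  set S1 := (Finset.Icc i (j-1)).filter P1 with hS1def
  set S2 := (Finset.Icc i (j-1)).filter P2 with hS2def
  have hcard : ((Finset.Icc i (j-1)).card : ℤ) = j - i := by
    rw [Int.card_Icc_of_le _ _ (by omega)]; ring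
  have hsum : (∑ m ∈ Finset.Icc i (j-1),
      (⌊g ((m:ℝ) + α) + 1/4⌋ + ⌊g ((m:ℝ) + (1 - α)) + 1/4⌋))
      = 2*(j-i)*n + (S1.card : ℤ) + (S2.card : ℤ) := by
    have hstep : ∀ m ∈ Finset.Icc i (j-1),
        (⌊g ((m:ℝ) + α) + 1/4⌋ + ⌊g ((m:ℝ) + (1 - α)) + 1/4⌋)
        = 2*n + ((if P1 m then (1:ℤ) else 0) + (if P2 m then (1:ℤ) else 0)) := by
      intro m hm
      rw [hfl _ (hmem1 m hm), hfl _ (hmem2 m hm)]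
      ring
    rw [Finset.sum_congr rfl hstep, Finset.sum_add_distrib, Finset.sum_add_distrib,
        Finset.sum_const, Finset.sum_boole, Finset.sum_boole, nsmul_eq_mul, hcard]
    rw [hS1def, hS2def]
    ring
  rw [hsum]
  push_cast
  rcases Finset.eq_empty_or_nonempty S1 with hS1e | hS1ne
  · -- no qualifying samples at all
    have hS2e : S2 = ∅ := by
      rcases Finset.eq_empty_or_nonempty S2 with h | h
      · exact h
      · exfalso
        obtain ⟨m, hm⟩ := h
        have hmI := (Finset.mem_filter.mp hm).1
        have hp2 := (Finset.mem_filter.mp hm).2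
        have hle : g ((m:ℝ) + (1-α)) ≤ g ((m:ℝ) + α) :=
          hanti (hsubI (hmem1 m hmI)) (hsubI (hmem2 m hmI)) (by linarith)
        have hmem : m ∈ S1 := Finset.mem_filter.mpr ⟨hmI, le_trans hp2 hle⟩
        rw [hS1e] at hmem
        exact absurd hmem (Finset.notMem_empty m)
    rw [hS1e, hS2e]
    simp only [Finset.card_empty, Nat.cast_zero, add_zero]
    have hIc := intervalIntegral.integral_mono_on hijR.le intervalIntegrable_const
      (hgInt i j ⟨le_refl _, hijR.le⟩ ⟨hijR.le, le_refl _⟩) hgn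
    rw [intervalIntegral.integral_const, smul_eq_mul] at hIc
    linarith only [hIc]
  · -- main case
    set ℓ₁ := S1.max' hS1ne with hℓ₁def
    have hl1mem := S1.max'_mem hS1ne
    have hl1Icc := (Finset.mem_filter.mp hl1mem).1
    have hl1P : (n:ℝ) + 3/4 ≤ g ((ℓ₁:ℝ) + α) := (Finset.mem_filter.mp hl1mem).2
    obtain ⟨hil1, hl1j⟩ := Finset.mem_Icc.mp hl1Icc
    have hl1jR : (ℓ₁:ℝ) ≤ (j:ℝ) - 1 := by
      have : (ℓ₁:ℝ) ≤ ((j-1:ℤ):ℝ) := by exact_mod_cast hl1j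
      push_cast at this; linarith
    have hil1R : (i:ℝ) ≤ (ℓ₁:ℝ) := by exact_mod_cast hil1
    have hN1 : (S1.card : ℤ) ≤ (ℓ₁ - i) + 1 := by
      have hsub : S1 ⊆ Finset.Icc i ℓ₁ := by
        intro m hm
        exact Finset.mem_Icc.mpr
          ⟨(Finset.mem_Icc.mp (Finset.mem_filter.mp hm).1).1, S1.le_max' m hm⟩
      have hc1 := Finset.card_le_card hsub
      have hc2 : ((Finset.Icc i ℓ₁).card : ℤ) = ℓ₁ + 1 - i := Int.card_Icc_of_le _ _ (by omega)
      have hc3 : ((S1.card : ℤ)) ≤ ((Finset.Icc i ℓ₁).card : ℤ) := by exact_mod_cast hc1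
      omega
    obtain ⟨p, v, hqp, hup, hpj, hv0, hvr, hN2⟩ :
        ∃ (p : ℝ) (v : ℤ), (n:ℝ) + 3/4 ≤ g p ∧ (ℓ₁:ℝ) + α ≤ p ∧ p ≤ (j:ℝ) ∧
          0 ≤ v ∧ (v:ℝ) ≤ (p - (i:ℝ)) + α ∧ (S2.card : ℤ) ≤ v := by
      rcases Finset.eq_empty_or_nonempty S2 with hS2e | hS2ne
      · refine ⟨(ℓ₁:ℝ) + α, 0, hl1P, le_refl _, by linarith, le_refl _, ?_, ?_⟩
        · push_cast; linarith
        · rw [hS2e]; simp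
      · set ℓ₂ := S2.max' hS2ne with hℓ₂def
        have hl2mem := S2.max'_mem hS2ne
        have hl2P : (n:ℝ) + 3/4 ≤ g ((ℓ₂:ℝ) + (1-α)) := (Finset.mem_filter.mp hl2mem).2
        obtain ⟨hil2, hl2j⟩ := Finset.mem_Icc.mp (Finset.mem_filter.mp hl2mem).1
        have hil2R : (i:ℝ) ≤ (ℓ₂:ℝ) := by exact_mod_cast hil2
        have hl2jR : (ℓ₂:ℝ) ≤ (j:ℝ) - 1 := by
          have : (ℓ₂:ℝ) ≤ ((j-1:ℤ):ℝ) := by exact_mod_cast hl2j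
          push_cast at this; linarith
        refine ⟨max ((ℓ₁:ℝ) + α) ((ℓ₂:ℝ) + 1 - α), ℓ₂ + 1 - i, ?_,
          le_max_left _ _, ?_, by omega, ?_, ?_⟩
        · rcases max_choice ((ℓ₁:ℝ) + α) ((ℓ₂:ℝ) + 1 - α) with h | h <;> rw [h]
          · exact hl1P
          · have he : (ℓ₂:ℝ) + 1 - α = (ℓ₂:ℝ) + (1 - α) := by ring
            rw [he]; exact hl2P
        · apply max_le <;> linarith
        · have := le_max_right ((ℓ₁:ℝ) + α) ((ℓ₂:ℝ) + 1 - α)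
          push_cast
          linarith
        · have hsub : S2 ⊆ Finset.Icc i ℓ₂ := by
            intro m hm
            exact Finset.mem_Icc.mpr
              ⟨(Finset.mem_Icc.mp (Finset.mem_filter.mp hm).1).1, S2.le_max' m hm⟩
          have hc1 := Finset.card_le_card hsub
          have hc2 : ((Finset.Icc i ℓ₂).card : ℤ) = ℓ₂ + 1 - i := Int.card_Icc_of_le _ _ (by omega)
          have hc3 : ((S2.card : ℤ)) ≤ ((Finset.Icc i ℓ₂).card : ℤ) := by exact_mod_cast hc1
          omega
    have hu0 : (0:ℤ) ≤ ℓ₁ - i := by omega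
    have hureal : ((ℓ₁ - i : ℤ):ℝ) ≤ (p - (i:ℝ)) - α := by push_cast; linarith
    have haα : α ≤ p - (i:ℝ) := by linarith
    have hpI : p ∈ Set.Icc (i:ℝ) ((j:ℝ)+1) := ⟨by linarith, by linarith⟩
    have hpj1 : p < (j:ℝ)+1 := by linarith
    -- subgradient at p
    set K : Set ℝ := (fun y => (g y - g p)/(y - p)) '' Set.Ioc p ((j:ℝ)+1) with hKdef
    have hKne : K.Nonempty := ⟨_, ⟨(j:ℝ)+1, ⟨hpj1, le_refl _⟩, rfl⟩⟩
    have hKlb : ∀ r ∈ K, -(1/2) ≤ r := by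
      rintro r ⟨y, ⟨hy1, hy2⟩, rfl⟩
      have hyI : y ∈ Set.Icc (i:ℝ) ((j:ℝ)+1) := ⟨by linarith [hpI.1], hy2⟩
      have hl := (abs_le.mp (hlip y hyI p hpI)).1
      have hyp : 0 < y - p := by linarith
      rw [le_div_iff₀ hyp]
      rw [abs_of_pos hyp] at hl
      linarith
    have hKbdd : BddBelow K := ⟨-(1/2), fun r hr => hKlb r hr⟩
    set k0 := sInf K with hk0def
    have hk0ge : -(1/2) ≤ k0 := le_csInf hKne hKlb
    have hsupR : ∀ y, p < y → y ≤ (j:ℝ)+1 → g p + k0*(y - p) ≤ g y := by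
      intro y hy1 hy2
      have hmem : (g y - g p)/(y - p) ∈ K := ⟨y, ⟨hy1, hy2⟩, rfl⟩
      have hle := csInf_le hKbdd hmem
      have hyp : 0 < y - p := by linarith
      have hmul := mul_le_mul_of_nonneg_right hle hyp.le
      rw [div_mul_cancel₀ _ (ne_of_gt hyp)] at hmul
      linarith
    have hsupL : ∀ x, (i:ℝ) ≤ x → x < p → g p + k0*(x - p) ≤ g x := by
      intro x hx1 hx2
      have hxI : x ∈ Set.Icc (i:ℝ) ((j:ℝ)+1) := ⟨hx1, by linarith [hpI.2]⟩
      have hslope : (g p - g x)/(p - x) ≤ k0 := by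
        apply le_csInf hKne
        rintro r ⟨y, ⟨hy1, hy2⟩, rfl⟩
        have hyI : y ∈ Set.Icc (i:ℝ) ((j:ℝ)+1) := ⟨by linarith [hpI.1], hy2⟩
        exact hconv.slope_mono_adjacent hxI hyI hx2 hy1
      have hxp : 0 < p - x := by linarith
      have hmul := mul_le_mul_of_nonneg_right hslope hxp.le
      rw [div_mul_cancel₀ _ (ne_of_gt hxp)] at hmul
      have he : k0*(x-p) = -(k0*(p-x)) := by ring
      linarith
    have hsup : ∀ x ∈ Set.Icc (i:ℝ) ((j:ℝ)+1), g p + k0*(x - p) ≤ g x := by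
      intro x hx
      rcases lt_trichotomy x p with h | h | h
      · exact hsupL x hx.1 h
      · rw [h]; simp
      · exact hsupR x h hx.2
    have hk0le : k0 ≤ 0 := by
      have hmem : (g ((j:ℝ)+1) - g p)/((j:ℝ)+1 - p) ∈ K := ⟨(j:ℝ)+1, ⟨hpj1, le_refl _⟩, rfl⟩
      have hle := csInf_le hKbdd hmem
      have hnum : g ((j:ℝ)+1) - g p ≤ 0 := sub_nonpos.mpr (hanti hpI hj1I (le_of_lt hpj1))
      have hden : (0:ℝ) < (j:ℝ)+1 - p := by linarith
      exact le_trans hle (div_nonpos_iff.mpr (Or.inr ⟨hnum, hden.le⟩))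
    have hZsup := hsup Z hZI
    rw [hZn] at hZsup
    have hk0Z : k0*(Z - p) ≤ -(3/4) := by linarith
    have hk0neg : k0 < 0 := by
      rcases lt_or_ge k0 0 with h | h
      · exact h
      · exfalso
        have h0 : k0 = 0 := le_antisymm hk0le h
        rw [h0] at hk0Z
        norm_num at hk0Z
    set k := -k0 with hkdef
    have hk0pos : (0:ℝ) < k := by rw [hkdef]; linarith
    have hk2 : k ≤ 1/2 := by rw [hkdef]; linarith
    have hZp : 0 < Z - p := by
      by_contra h
      push_neg at h
      have h0 : 0 ≤ (-k0)*(-(Z-p)) := mul_nonneg (by linarith) (by linarith)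
      have he : (-k0)*(-(Z-p)) = k0*(Z-p) := by ring
      linarith
    have hkZ : 3/4 ≤ k*(Z - p) := by
      have he : k*(Z-p) = -(k0*(Z-p)) := by rw [hkdef]; ring
      linarith [he, hk0Z]
    have hs1 : 3 < 4*k*(((j:ℝ) - p)+1) := by
      have hlt : k*(Z - p) < k*(((j:ℝ) - p) + 1) := by
        apply mul_lt_mul_of_pos_left _ hk0pos
        linarith
      nlinarith [hlt, hkZ]
    have hka : k*((p - (i:ℝ))-1) ≤ 1/4 := by
      have hs := hsup ((i:ℝ)+1) hi1I
      have he : k0*(((i:ℝ)+1) - p) = k*((p - (i:ℝ)) - 1) := by rw [hkdef]; ring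
      linarith
    have hm0' : (0:ℝ) ≤ (j:ℝ) - p := by linarith
    have hMeq : ((j - i : ℤ):ℝ) = (p - (i:ℝ)) + ((j:ℝ) - p) := by push_cast; ring
    obtain ⟨b, hb0, hbm, hcore⟩ := core_ineq α k (p - (i:ℝ)) ((j:ℝ) - p) (ℓ₁ - i) v (j - i)
      hα0 hα2 hk0pos hk2 hu0 hureal hv0 (by linarith [hvr]) haα hm0' hMeq hs1 hka
    -- integral lower bound
    have hpbj : p + b ≤ (j:ℝ) := by linarith
    have hipb : (i:ℝ) ≤ p + b := by linarith
    have hpbIcc : p + b ∈ Set.Icc (i:ℝ) (j:ℝ) := ⟨hipb, hpbj⟩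
    have hiIcc : (i:ℝ) ∈ Set.Icc (i:ℝ) (j:ℝ) := ⟨le_refl _, hijR.le⟩
    have hjIcc : (j:ℝ) ∈ Set.Icc (i:ℝ) (j:ℝ) := ⟨hijR.le, le_refl _⟩
    have hsplit : (∫ z in (i:ℝ)..((j:ℝ)), g z)
        = (∫ z in (i:ℝ)..(p+b), g z) + ∫ z in (p+b)..(j:ℝ), g z :=
      (intervalIntegral.integral_add_adjacent_intervals
        (hgInt i (p+b) hiIcc hpbIcc) (hgInt (p+b) j hpbIcc hjIcc)).symm
    have hcont1 : Continuous (fun z : ℝ => k0*(z - p)) := by fun_prop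
    have hcont2 : Continuous (fun z : ℝ => g p + k0*(z - p)) := by fun_prop
    have hF : ∀ z : ℝ, HasDerivAt (fun w => g p * w + k0/2*(w-p)^2) (g p + k0*(z-p)) z := by
      intro z
      have h1 : HasDerivAt (fun w : ℝ => w) 1 z := hasDerivAt_id z
      have h2 := (h1.sub_const p).pow 2
      have h3 := h2.const_mul (k0/2)
      have h4 := (h1.const_mul (g p)).add h3
      refine h4.congr_deriv ?_
      push_cast
      ring
    have hlineInt0 := intervalIntegral.integral_eq_sub_of_hasDerivAt
      (fun z _ => hF z) (hcont2.intervalIntegrable (i:ℝ) (p+b))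
    have hlineInt : (∫ z in (i:ℝ)..(p+b), (g p + k0*(z - p)))
        = g p * ((p+b) - (i:ℝ)) + k0*(((p+b)-p)^2 - ((i:ℝ)-p)^2)/2 := by
      rw [hlineInt0]
      ring
    have hA : g p * ((p+b) - (i:ℝ)) + k0*(((p+b)-p)^2 - ((i:ℝ)-p)^2)/2
        ≤ ∫ z in (i:ℝ)..(p+b), g z := by
      rw [← hlineInt]
      apply intervalIntegral.integral_mono_on hipb
        (hcont2.intervalIntegrable _ _)
        (hgInt i (p+b) hiIcc hpbIcc)
      intro x hx
      exact hsup x ⟨hx.1, by linarith [hx.2]⟩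
    have hB : (n:ℝ) * ((j:ℝ) - (p+b)) ≤ ∫ z in (p+b)..(j:ℝ), g z := by
      have hmono := intervalIntegral.integral_mono_on hpbj intervalIntegrable_const
        (hgInt (p+b) j hpbIcc hjIcc) (fun x hx => hgn x ⟨by linarith [hx.1], hx.2⟩)
      rw [intervalIntegral.integral_const, smul_eq_mul] at hmono
      linarith [hmono]
    have hgpab : ((n:ℝ) + 3/4)*((p - (i:ℝ)) + b) ≤ g p * ((p - (i:ℝ)) + b) := by
      apply mul_le_mul_of_nonneg_right hqp
      linarith
    have hk0k : k0 = -k := by rw [hkdef]; ring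
    rw [hk0k] at hA
    have hN1R : ((S1.card : ℤ):ℝ) ≤ ((ℓ₁ - i : ℤ):ℝ) + 1 := by exact_mod_cast hN1
    have hN2R : ((S2.card : ℤ):ℝ) ≤ (v:ℝ) := by exact_mod_cast hN2
    push_cast at hN1R hN2R hcore ⊢
    have hrw : ((n:ℝ) + 3/4)*((p - (i:ℝ)) + b) + (n:ℝ)*((j:ℝ) - (p+b))
        = (n:ℝ)*((j:ℝ) - (i:ℝ)) + 3/4*((p - (i:ℝ)) + b) := by ring
    have hAB : (n:ℝ)*((j:ℝ)-(i:ℝ)) + 3/4*((p-(i:ℝ))+b)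
        + (-k)*(((p+b)-p)^2 - ((i:ℝ)-p)^2)/2 ≤ (∫ z in (i:ℝ)..(j:ℝ), g z) := by
      rw [hsplit]
      linarith only [hA, hB, hgpab, hrw]
    have hsq : (-k)*(((p+b)-p)^2 - ((i:ℝ)-p)^2)/2 = k*((p-(i:ℝ))^2 - b^2)/2 := by ring
    linarith only [hAB, hsq, hcore, hN1R, hN2R]
end

section
/- Let b ∈ ℕ, α ∈ [0, 1/2], and let g be a nonnegative, decreasing, convex function on [0, b] with g(b) = 0 satisfying |g(z) − g(w)| ≤ (1/2)|z − w| for all z, w ∈ [0, b]. Then ∑_{m=0}^{b−1} (⌊g(m+α) + 1/4⌋ + ⌊g(m+1−α) + 1/4⌋) ≤ 2∫₀^b g(z) dz. -/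
open Real intervalIntegral Set MeasureTheory

private lemma lin_int (p q a c : ℝ) :
    ∫ x in a..c, (p + q * x) = p * (c - a) + q * (c ^ 2 - a ^ 2) / 2 := by
  have h1 : IntervalIntegrable (fun _ : ℝ => p) volume a c := intervalIntegrable_const
  have h2 : IntervalIntegrable (fun x : ℝ => q * x) volume a c :=
    (continuous_const.mul continuous_id).intervalIntegrable a c
  rw [intervalIntegral.integral_add h1 h2, intervalIntegral.integral_const,
    intervalIntegral.integral_const_mul, integral_id]
  simp only [smul_eq_mul]
  ring

private lemma ramp_cont (σ c t₀ : ℝ) : Continuous fun x : ℝ => max 0 (c - σ * (x - t₀)) := by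
  fun_prop

private lemma ramp_cont' (σ c t₀ : ℝ) : Continuous fun x : ℝ => max 0 (c - σ * (t₀ - x)) := by
  fun_prop

private lemma ramp_right (σ c t₀ d : ℝ) (hσ : 0 < σ) (hc : 0 ≤ c) (hd : t₀ + c / σ ≤ d) :
    c ^ 2 / (2 * σ) ≤ ∫ x in t₀..d, max 0 (c - σ * (x - t₀)) := by
  have hz1 : t₀ ≤ t₀ + c / σ := by
    have : 0 ≤ c / σ := div_nonneg hc hσ.le
    linarith
  have hcont := ramp_cont σ c t₀
  have hint1 : IntervalIntegrable (fun x : ℝ => max 0 (c - σ * (x - t₀))) volume t₀ (t₀ + c / σ) :=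
    hcont.intervalIntegrable _ _
  have hint2 : IntervalIntegrable (fun x : ℝ => max 0 (c - σ * (x - t₀))) volume (t₀ + c / σ) d :=
    hcont.intervalIntegrable _ _
  rw [← intervalIntegral.integral_add_adjacent_intervals hint1 hint2]
  have e1 : ∫ x in t₀..(t₀ + c / σ), max 0 (c - σ * (x - t₀))
      = ∫ x in t₀..(t₀ + c / σ), ((c + σ * t₀) + (-σ) * x) := by
    apply intervalIntegral.integral_congr
    intro x hx
    rw [Set.uIcc_of_le hz1] at hx
    have h3 : σ * (x - t₀) ≤ σ * (c / σ) := mul_le_mul_of_nonneg_left (by linarith [hx.2]) hσ.le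
    rw [mul_div_cancel₀ _ (ne_of_gt hσ)] at h3
    have h4 : 0 ≤ c - σ * (x - t₀) := by linarith
    dsimp only; rw [max_eq_right h4]; ring
  have e2 : (0:ℝ) ≤ ∫ x in (t₀ + c / σ)..d, max 0 (c - σ * (x - t₀)) :=
    intervalIntegral.integral_nonneg hd (fun x _ => le_max_left _ _)
  rw [e1, lin_int]
  have e3 : (c + σ * t₀) * (t₀ + c / σ - t₀) + (-σ) * ((t₀ + c / σ) ^ 2 - t₀ ^ 2) / 2
      = c ^ 2 / (2 * σ) := by
    field_simp
    ring
  linarith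

private lemma ramp_left (σ c t₀ a : ℝ) (hσ : 0 < σ) (hc : 0 ≤ c) (ha : a ≤ t₀) :
    ∫ x in a..t₀, max 0 (c - σ * (t₀ - x)) ≤ c ^ 2 / (2 * σ) := by
  have hcont := ramp_cont' σ c t₀
  rcases le_or_gt (t₀ - c / σ) a with h | h
  · have e1 : ∫ x in a..t₀, max 0 (c - σ * (t₀ - x))
        = ∫ x in a..t₀, ((c - σ * t₀) + σ * x) := by
      apply intervalIntegral.integral_congr
      intro x hx
      rw [Set.uIcc_of_le ha] at hx
      have h3 : σ * (t₀ - x) ≤ σ * (c / σ) := mul_le_mul_of_nonneg_left (by linarith [hx.1]) hσ.le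
      rw [mul_div_cancel₀ _ (ne_of_gt hσ)] at h3
      have h4 : 0 ≤ c - σ * (t₀ - x) := by linarith
      dsimp only; rw [max_eq_right h4]; ring
    rw [e1, lin_int]
    have h2σ : (0:ℝ) < 2 * σ := by linarith
    rw [le_div_iff₀ h2σ]
    nlinarith [sq_nonneg (c - σ * (t₀ - a))]
  · have hz0 : 0 ≤ c / σ := div_nonneg hc hσ.le
    have hzt : t₀ - c / σ ≤ t₀ := by linarith
    have hint1 : IntervalIntegrable (fun x : ℝ => max 0 (c - σ * (t₀ - x))) volume a (t₀ - c / σ) :=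
      hcont.intervalIntegrable _ _
    have hint2 : IntervalIntegrable (fun x : ℝ => max 0 (c - σ * (t₀ - x))) volume (t₀ - c / σ) t₀ :=
      hcont.intervalIntegrable _ _
    rw [← intervalIntegral.integral_add_adjacent_intervals hint1 hint2]
    have e0 : ∫ x in a..(t₀ - c / σ), max 0 (c - σ * (t₀ - x)) = 0 := by
      have : ∀ x ∈ Set.uIcc a (t₀ - c / σ), max 0 (c - σ * (t₀ - x)) = (fun _ : ℝ => (0:ℝ)) x := by
        intro x hx
        rw [Set.uIcc_of_le h.le] at hx
        have h3 : σ * (c / σ) ≤ σ * (t₀ - x) := mul_le_mul_of_nonneg_left (by linarith [hx.2]) hσ.le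
        rw [mul_div_cancel₀ _ (ne_of_gt hσ)] at h3
        have h4 : c - σ * (t₀ - x) ≤ 0 := by linarith
        simp [max_eq_left h4]
      rw [intervalIntegral.integral_congr this, intervalIntegral.integral_zero]
    have e1 : ∫ x in (t₀ - c / σ)..t₀, max 0 (c - σ * (t₀ - x))
        = ∫ x in (t₀ - c / σ)..t₀, ((c - σ * t₀) + σ * x) := by
      apply intervalIntegral.integral_congr
      intro x hx
      rw [Set.uIcc_of_le hzt] at hx
      have h3 : σ * (t₀ - x) ≤ σ * (c / σ) := mul_le_mul_of_nonneg_left (by linarith [hx.1]) hσ.le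
      rw [mul_div_cancel₀ _ (ne_of_gt hσ)] at h3
      have h4 : 0 ≤ c - σ * (t₀ - x) := by linarith
      dsimp only; rw [max_eq_right h4]; ring
    rw [e0, e1, lin_int, zero_add]
    have e3 : (c - σ * t₀) * (t₀ - (t₀ - c / σ)) + σ * (t₀ ^ 2 - (t₀ - c / σ) ^ 2) / 2
        = c ^ 2 / (2 * σ) := by
      field_simp
      ring
    linarith

private lemma count_le (b : ℕ) (x : ℝ) (hx : (-1:ℝ) ≤ x) :
    (∑ m ∈ Finset.range b, if (m : ℝ) ≤ x then (1:ℝ) else 0) ≤ x + 1 := by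
  rcases lt_or_ge x 0 with h | h
  · have h0 : ∀ m ∈ Finset.range b, (if (m:ℝ) ≤ x then (1:ℝ) else 0) = 0 := by
      intro m _
      rw [if_neg]
      push_neg
      exact lt_of_lt_of_le h (Nat.cast_nonneg m)
    rw [Finset.sum_congr rfl h0]
    simp
    linarith
  · rw [Finset.sum_boole]
    have hfl : 0 ≤ ⌊x⌋ := Int.floor_nonneg.mpr h
    have hsub : (Finset.range b).filter (fun m : ℕ => (m:ℝ) ≤ x) ⊆ Finset.range (⌊x⌋.toNat + 1) := by
      intro m hm
      simp only [Finset.mem_filter, Finset.mem_range] at hm ⊢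
      have h1 : (m:ℤ) ≤ ⌊x⌋ := Int.le_floor.mpr (by exact_mod_cast hm.2)
      omega
    have hcard := Finset.card_le_card hsub
    rw [Finset.card_range] at hcard
    have h2 : ((⌊x⌋.toNat : ℝ)) ≤ x := by
      have : ((⌊x⌋.toNat : ℤ) : ℝ) ≤ x := by
        rw [Int.toNat_of_nonneg hfl]; exact Int.floor_le x
      exact_mod_cast this
    have h3 : (((Finset.range b).filter (fun m : ℕ => (m:ℝ) ≤ x)).card : ℝ) ≤ (⌊x⌋.toNat : ℝ) + 1 := by
      exact_mod_cast hcard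
    linarith

private lemma floor_eq_sum (K : ℕ) (g0 y : ℝ) (hy : 0 ≤ y) (hyg : y ≤ g0)
    (hK : K = (⌊g0 + 1/4⌋).toNat) :
    ((⌊y + 1/4⌋ : ℤ) : ℝ) = ∑ n ∈ Finset.Icc 1 K, (if (n:ℝ) - 1/4 ≤ y then (1:ℝ) else 0) := by
  have hfl0 : 0 ≤ ⌊y + 1/4⌋ := Int.floor_nonneg.mpr (by linarith)
  have hj' : ((⌊y + 1/4⌋.toNat : ℤ)) = ⌊y + 1/4⌋ := Int.toNat_of_nonneg hfl0
  have hjK : ⌊y + 1/4⌋.toNat ≤ K := by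
    rw [hK]
    exact Int.toNat_le_toNat (Int.floor_le_floor (by linarith))
  rw [Finset.sum_boole]
  have hfilter : (Finset.Icc 1 K).filter (fun n : ℕ => (n:ℝ) - 1/4 ≤ y)
      = Finset.Icc 1 (⌊y + 1/4⌋.toNat) := by
    ext n
    simp only [Finset.mem_filter, Finset.mem_Icc]
    constructor
    · rintro ⟨⟨h1, _⟩, h2⟩
      refine ⟨h1, ?_⟩
      have h3 : (n:ℤ) ≤ ⌊y + 1/4⌋ := Int.le_floor.mpr (by push_cast; linarith)
      omega
    · rintro ⟨h1, h2⟩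
      have hn : (n:ℤ) ≤ ⌊y + 1/4⌋ := by omega
      have h4 := Int.le_floor.mp hn
      push_cast at h4
      exact ⟨⟨h1, le_trans h2 hjK⟩, by linarith⟩
  rw [hfilter, Nat.card_Icc]
  have : (⌊y + 1/4⌋.toNat + 1 - 1) = ⌊y + 1/4⌋.toNat := by omega
  rw [this]
  exact_mod_cast congrArg (fun z : ℤ => (z : ℝ)) hj'.symm

private lemma clamp_eq (y i : ℝ) : min (max (y - i) 0) 1 = min y (i + 1) - min y i := by
  rcases le_total y i with h | h
  · rw [min_eq_left (by linarith : y ≤ i + 1), min_eq_left h,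
      max_eq_right (by linarith : y - i ≤ 0)]
    simp
  · rcases le_total y (i + 1) with h2 | h2
    · rw [min_eq_left h2, min_eq_right h, max_eq_left (by linarith : (0:ℝ) ≤ y - i),
        min_eq_left (by linarith : y - i ≤ 1)]
    · rw [min_eq_right h2, min_eq_right h, max_eq_left (by linarith : (0:ℝ) ≤ y - i),
        min_eq_right (by linarith : (1:ℝ) ≤ y - i)]
      ring

private lemma clamp_sum_le (K : ℕ) (y : ℝ) (hy : 0 ≤ y) :
    ∑ n ∈ Finset.Icc 1 K, min (max (y - ((n:ℝ) - 1)) 0) 1 ≤ y := by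
  have e : ∀ n ∈ Finset.Icc 1 K, min (max (y - ((n:ℝ) - 1)) 0) 1
      = min y (n:ℝ) - min y ((n:ℝ) - 1) := by
    intro n _
    rw [clamp_eq y ((n:ℝ) - 1)]
    norm_num
  rw [Finset.sum_congr rfl e]
  have htel : ∀ k : ℕ, ∑ n ∈ Finset.Icc 1 k, (min y (n:ℝ) - min y ((n:ℝ) - 1))
      = min y (k:ℝ) - min y 0 := by
    intro k
    induction k with
    | zero => simp
    | succ j ih =>
      rw [Finset.sum_Icc_succ_top (by omega : 1 ≤ j + 1), ih]
      push_cast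
      ring
  rw [htel K]
  have h1 : min y ((K:ℕ):ℝ) ≤ y := min_le_left _ _
  have h2 : min y 0 = 0 := min_eq_right hy
  rw [h2]
  linarith

private lemma phi_ge_one_sub (y n : ℝ) : 1 - max 0 (n - y) ≤ min (max (y - (n - 1)) 0) 1 := by
  refine le_min ?_ (by linarith [le_max_left (0:ℝ) (n - y)])
  have h := le_max_right (0:ℝ) (n - y)
  have h2 : y - (n - 1) ≤ max (y - (n - 1)) 0 := le_max_left _ _
  linarith

private lemma phi_ge (y n w : ℝ) (h1 : w ≤ y) (h2 : y ≤ n) :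
    max 0 (w - (n - 1)) ≤ min (max (y - (n - 1)) 0) 1 :=
  le_min (max_le (le_max_right _ _) (le_trans (by linarith) (le_max_left _ _)))
    (max_le zero_le_one (by linarith))

set_option maxHeartbeats 1000000 in
private lemma level_bound
    (b : ℕ) (α : ℝ) (hα : α ∈ Set.Icc (0:ℝ) (1/2)) (g : ℝ → ℝ)
    (hnonneg : ∀ z ∈ Set.Icc (0:ℝ) (b:ℝ), 0 ≤ g z)
    (hanti : AntitoneOn g (Set.Icc (0:ℝ) (b:ℝ)))
    (hconv : ConvexOn ℝ (Set.Icc (0:ℝ) (b:ℝ)) g)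
    (hb : g (b:ℝ) = 0)
    (hlip : ∀ z ∈ Set.Icc (0:ℝ) (b:ℝ), ∀ w ∈ Set.Icc (0:ℝ) (b:ℝ),
      |g z - g w| ≤ (1/2) * |z - w|)
    (hgc : ContinuousOn g (Set.Icc (0:ℝ) (b:ℝ)))
    (n : ℕ) (hn1 : 1 ≤ n) (hng : (n:ℝ) - 1/4 ≤ g 0) :
    (∑ m ∈ Finset.range b,
      ((if (n:ℝ) - 1/4 ≤ g ((m:ℝ) + α) then (1:ℝ) else 0)
        + (if (n:ℝ) - 1/4 ≤ g ((m:ℝ) + (1 - α)) then (1:ℝ) else 0)))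
      ≤ 2 * ∫ x in (0:ℝ)..(b:ℝ), min (max (g x - ((n:ℝ) - 1)) 0) 1 := by
  obtain ⟨hα0, hα2⟩ := hα
  obtain ⟨s, hs⟩ : ∃ s : ℝ, s = (n:ℝ) - 1/4 := ⟨_, rfl⟩
  simp only [← hs] at hng ⊢
  have hn1' : (1:ℝ) ≤ (n:ℝ) := by exact_mod_cast hn1
  have hs34 : (3/4:ℝ) ≤ s := by rw [hs]; linarith
  have hb0 : (0:ℝ) ≤ (b:ℝ) := Nat.cast_nonneg b
  have h0Icc : (0:ℝ) ∈ Set.Icc (0:ℝ) (b:ℝ) := ⟨le_refl _, hb0⟩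
  have hbIcc : (b:ℝ) ∈ Set.Icc (0:ℝ) (b:ℝ) := ⟨hb0, le_refl _⟩
  have hg00 : 0 ≤ g 0 := hnonneg 0 h0Icc
  -- the level point u
  obtain ⟨u, hu0, hub, hgu, hult, hmax⟩ :
      ∃ u : ℝ, 0 ≤ u ∧ u ≤ (b:ℝ) ∧ g u = s ∧ u < (b:ℝ) ∧
        ∀ t ∈ Set.Icc (0:ℝ) (b:ℝ), s ≤ g t → t ≤ u := by
    have hS0 : (0:ℝ) ∈ {t : ℝ | t ∈ Set.Icc (0:ℝ) (b:ℝ) ∧ s ≤ g t} := ⟨h0Icc, by linarith⟩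
    have hSne : {t : ℝ | t ∈ Set.Icc (0:ℝ) (b:ℝ) ∧ s ≤ g t}.Nonempty := ⟨0, hS0⟩
    have hSbdd : BddAbove {t : ℝ | t ∈ Set.Icc (0:ℝ) (b:ℝ) ∧ s ≤ g t} :=
      ⟨(b:ℝ), fun t ht => ht.1.2⟩
    refine ⟨sSup {t : ℝ | t ∈ Set.Icc (0:ℝ) (b:ℝ) ∧ s ≤ g t}, le_csSup hSbdd hS0,
      csSup_le hSne (fun t ht => ht.1.2), ?_, ?_, fun t ht hgt => le_csSup hSbdd ⟨ht, hgt⟩⟩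
    all_goals {
      have hu0 : 0 ≤ sSup {t : ℝ | t ∈ Set.Icc (0:ℝ) (b:ℝ) ∧ s ≤ g t} := le_csSup hSbdd hS0
      have hub : sSup {t : ℝ | t ∈ Set.Icc (0:ℝ) (b:ℝ) ∧ s ≤ g t} ≤ (b:ℝ) :=
        csSup_le hSne (fun t ht => ht.1.2)
      have huIcc : sSup {t : ℝ | t ∈ Set.Icc (0:ℝ) (b:ℝ) ∧ s ≤ g t} ∈ Set.Icc (0:ℝ) (b:ℝ) :=
        ⟨hu0, hub⟩
      have hgus : s ≤ g (sSup {t : ℝ | t ∈ Set.Icc (0:ℝ) (b:ℝ) ∧ s ≤ g t}) := by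
        by_contra hcon
        push_neg at hcon
        obtain ⟨t, htS, htl⟩ := exists_lt_of_lt_csSup hSne
          (by linarith : sSup {t : ℝ | t ∈ Set.Icc (0:ℝ) (b:ℝ) ∧ s ≤ g t}
            - (s - g (sSup {t : ℝ | t ∈ Set.Icc (0:ℝ) (b:ℝ) ∧ s ≤ g t}))
            < sSup {t : ℝ | t ∈ Set.Icc (0:ℝ) (b:ℝ) ∧ s ≤ g t})
        have htu : t ≤ sSup {t : ℝ | t ∈ Set.Icc (0:ℝ) (b:ℝ) ∧ s ≤ g t} := le_csSup hSbdd htS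
        have hl := hlip t htS.1 _ huIcc
        rw [abs_of_nonpos (by linarith : t - sSup {t : ℝ | t ∈ Set.Icc (0:ℝ) (b:ℝ) ∧ s ≤ g t} ≤ 0)] at hl
        have h1 := le_abs_self (g t - g (sSup {t : ℝ | t ∈ Set.Icc (0:ℝ) (b:ℝ) ∧ s ≤ g t}))
        linarith [htS.2]
      have hult : sSup {t : ℝ | t ∈ Set.Icc (0:ℝ) (b:ℝ) ∧ s ≤ g t} < (b:ℝ) := by
        rcases eq_or_lt_of_le hub with h | h
        · exfalso
          rw [h, hb] at hgus
          linarith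
        · exact h
      have hgsu : g (sSup {t : ℝ | t ∈ Set.Icc (0:ℝ) (b:ℝ) ∧ s ≤ g t}) ≤ s := by
        by_contra hcon
        push_neg at hcon
        have htu : sSup {t : ℝ | t ∈ Set.Icc (0:ℝ) (b:ℝ) ∧ s ≤ g t}
            < min (b:ℝ) (sSup {t : ℝ | t ∈ Set.Icc (0:ℝ) (b:ℝ) ∧ s ≤ g t}
              + (g (sSup {t : ℝ | t ∈ Set.Icc (0:ℝ) (b:ℝ) ∧ s ≤ g t}) - s)) :=
          lt_min hult (by linarith)
        have htb := min_le_left (b:ℝ) (sSup {t : ℝ | t ∈ Set.Icc (0:ℝ) (b:ℝ) ∧ s ≤ g t}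
              + (g (sSup {t : ℝ | t ∈ Set.Icc (0:ℝ) (b:ℝ) ∧ s ≤ g t}) - s))
        have htb2 := min_le_right (b:ℝ) (sSup {t : ℝ | t ∈ Set.Icc (0:ℝ) (b:ℝ) ∧ s ≤ g t}
              + (g (sSup {t : ℝ | t ∈ Set.Icc (0:ℝ) (b:ℝ) ∧ s ≤ g t}) - s))
        have htIcc : min (b:ℝ) (sSup {t : ℝ | t ∈ Set.Icc (0:ℝ) (b:ℝ) ∧ s ≤ g t}
              + (g (sSup {t : ℝ | t ∈ Set.Icc (0:ℝ) (b:ℝ) ∧ s ≤ g t}) - s))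
            ∈ Set.Icc (0:ℝ) (b:ℝ) := ⟨by linarith, htb⟩
        have hl := hlip _ huIcc _ htIcc
        rw [abs_of_nonpos (by linarith : sSup {t : ℝ | t ∈ Set.Icc (0:ℝ) (b:ℝ) ∧ s ≤ g t}
          - min (b:ℝ) (sSup {t : ℝ | t ∈ Set.Icc (0:ℝ) (b:ℝ) ∧ s ≤ g t}
              + (g (sSup {t : ℝ | t ∈ Set.Icc (0:ℝ) (b:ℝ) ∧ s ≤ g t}) - s)) ≤ 0)] at hl
        have h3 := le_abs_self (g (sSup {t : ℝ | t ∈ Set.Icc (0:ℝ) (b:ℝ) ∧ s ≤ g t})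
          - g (min (b:ℝ) (sSup {t : ℝ | t ∈ Set.Icc (0:ℝ) (b:ℝ) ∧ s ≤ g t}
              + (g (sSup {t : ℝ | t ∈ Set.Icc (0:ℝ) (b:ℝ) ∧ s ≤ g t}) - s))))
        have h4 : s ≤ g (min (b:ℝ) (sSup {t : ℝ | t ∈ Set.Icc (0:ℝ) (b:ℝ) ∧ s ≤ g t}
              + (g (sSup {t : ℝ | t ∈ Set.Icc (0:ℝ) (b:ℝ) ∧ s ≤ g t}) - s))) := by
          linarith
        have := le_csSup hSbdd ⟨htIcc, h4⟩
        linarith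
      first
        | exact le_antisymm hgsu hgus
        | exact hult
    }
  have huIcc : u ∈ Set.Icc (0:ℝ) (b:ℝ) := ⟨hu0, hub⟩
  have hbu : 3/2 ≤ (b:ℝ) - u := by
    have hl := hlip u huIcc (b:ℝ) hbIcc
    rw [hb, sub_zero, abs_of_nonneg (by linarith : (0:ℝ) ≤ g u),
      abs_of_nonpos (by linarith : u - (b:ℝ) ≤ 0)] at hl
    linarith
  -- φ and its basic properties
  have hφc : Continuous (fun y : ℝ => min (max (y - ((n:ℝ) - 1)) 0) 1) := by fun_prop
  have hφg : ContinuousOn (fun x => min (max (g x - ((n:ℝ) - 1)) 0) 1) (Set.Icc (0:ℝ) (b:ℝ)) :=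
    hφc.comp_continuousOn hgc
  have hφnn : ∀ y : ℝ, 0 ≤ min (max (y - ((n:ℝ) - 1)) 0) 1 :=
    fun y => le_min (le_max_right _ _) zero_le_one
  have hint : ∀ p q : ℝ, p ∈ Set.Icc (0:ℝ) (b:ℝ) → q ∈ Set.Icc (0:ℝ) (b:ℝ) →
      IntervalIntegrable (fun x => min (max (g x - ((n:ℝ) - 1)) 0) 1) volume p q := by
    intro p q hp hq
    apply ContinuousOn.intervalIntegrable
    apply hφg.mono
    have h1 : p ∈ Set.uIcc (0:ℝ) (b:ℝ) := by rw [Set.uIcc_of_le hb0]; exact hp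
    have h2 : q ∈ Set.uIcc (0:ℝ) (b:ℝ) := by rw [Set.uIcc_of_le hb0]; exact hq
    have := Set.uIcc_subset_uIcc h1 h2
    rwa [Set.uIcc_of_le hb0] at this
  -- counting
  have hcount : ∀ β : ℝ, 0 ≤ β → β ≤ 1 →
      (∑ m ∈ Finset.range b, if s ≤ g ((m:ℝ) + β) then (1:ℝ) else 0)
        ≤ ∑ m ∈ Finset.range b, if (m:ℝ) ≤ u - β then (1:ℝ) else 0 := by
    intro β hβ0 hβ1
    apply Finset.sum_le_sum
    intro m hm
    by_cases hif : s ≤ g ((m:ℝ) + β)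
    · rw [if_pos hif]
      have hm0 : (0:ℝ) ≤ (m:ℝ) := Nat.cast_nonneg m
      have hmb : (m:ℝ) + 1 ≤ (b:ℝ) := by
        exact_mod_cast Nat.succ_le_of_lt (Finset.mem_range.mp hm)
      have hmIcc : (m:ℝ) + β ∈ Set.Icc (0:ℝ) (b:ℝ) := ⟨by linarith, by linarith⟩
      have := hmax _ hmIcc hif
      rw [if_pos (by linarith : (m:ℝ) ≤ u - β)]
    · rw [if_neg hif]
      split <;> norm_num
  have hc1 : (∑ m ∈ Finset.range b, if s ≤ g ((m:ℝ) + α) then (1:ℝ) else 0) ≤ u - α + 1 :=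
    le_trans (hcount α hα0 (by linarith)) (count_le b (u - α) (by linarith))
  have hc2 : (∑ m ∈ Finset.range b, if s ≤ g ((m:ℝ) + (1 - α)) then (1:ℝ) else 0) ≤ u + α := by
    have := le_trans (hcount (1 - α) (by linarith) (by linarith))
      (count_le b (u - (1 - α)) (by linarith))
    linarith
  rw [Finset.sum_add_distrib]
  rcases lt_or_ge u (1/2) with hu12 | hu12
  · -- small u : count ≤ 1, integral ≥ 9/16
    have hC1 : (∑ m ∈ Finset.range b, if s ≤ g ((m:ℝ) + α) then (1:ℝ) else 0)
        + (∑ m ∈ Finset.range b, if s ≤ g ((m:ℝ) + (1 - α)) then (1:ℝ) else 0) ≤ 1 := by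
      have e2 : ∀ m ∈ Finset.range b, (if s ≤ g ((m:ℝ) + (1 - α)) then (1:ℝ) else 0) = 0 := by
        intro m hm
        rw [if_neg]
        intro hcon
        have hm0 : (0:ℝ) ≤ (m:ℝ) := Nat.cast_nonneg m
        have hmb : (m:ℝ) + 1 ≤ (b:ℝ) := by
          exact_mod_cast Nat.succ_le_of_lt (Finset.mem_range.mp hm)
        have hmIcc : (m:ℝ) + (1 - α) ∈ Set.Icc (0:ℝ) (b:ℝ) := ⟨by linarith, by linarith⟩
        have := hmax _ hmIcc hcon
        linarith
      have e1 : ∀ m ∈ Finset.range b, (if s ≤ g ((m:ℝ) + α) then (1:ℝ) else 0)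
          ≤ if m = 0 then (1:ℝ) else 0 := by
        intro m hm
        by_cases hm0 : m = 0
        · rw [if_pos hm0]; split <;> norm_num
        · rw [if_neg hm0]
          by_cases hif : s ≤ g ((m:ℝ) + α)
          · exfalso
            have hm1 : (1:ℝ) ≤ (m:ℝ) := by
              have : 1 ≤ m := Nat.one_le_iff_ne_zero.mpr hm0
              exact_mod_cast this
            have hmb : (m:ℝ) + 1 ≤ (b:ℝ) := by
              exact_mod_cast Nat.succ_le_of_lt (Finset.mem_range.mp hm)
            have hmIcc : (m:ℝ) + α ∈ Set.Icc (0:ℝ) (b:ℝ) := ⟨by linarith, by linarith⟩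
            have := hmax _ hmIcc hif
            linarith
          · rw [if_neg hif]
      have h1 : (∑ m ∈ Finset.range b, if s ≤ g ((m:ℝ) + α) then (1:ℝ) else 0)
          ≤ ∑ m ∈ Finset.range b, if m = 0 then (1:ℝ) else 0 := Finset.sum_le_sum e1
      have h2 : (∑ m ∈ Finset.range b, if m = 0 then (1:ℝ) else 0) ≤ 1 := by
        rw [Finset.sum_ite_eq' (Finset.range b) 0 (fun _ => (1:ℝ))]
        split <;> norm_num
      rw [Finset.sum_congr rfl e2]
      simp only [Finset.sum_const_zero, add_zero]
      linarith
    have hram : ∀ x ∈ Set.Icc u (b:ℝ), max 0 (3/4 - (1/2) * (x - u))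
        ≤ min (max (g x - ((n:ℝ) - 1)) 0) 1 := by
      intro x hx
      have hxIcc : x ∈ Set.Icc (0:ℝ) (b:ℝ) := ⟨le_trans hu0 hx.1, hx.2⟩
      have hgxs : g x ≤ s := hgu ▸ hanti huIcc hxIcc hx.1
      have hlb : s - (1/2) * (x - u) ≤ g x := by
        have hl := hlip u huIcc x hxIcc
        have h5 := le_abs_self (g u - g x)
        rw [abs_of_nonpos (by linarith [hx.1] : u - x ≤ 0)] at hl
        linarith [hgu.ge]
      have hp := phi_ge (g x) (n:ℝ) (s - (1/2) * (x - u)) hlb (by rw [hs] at hgxs; linarith)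
      have e : (3:ℝ)/4 - (1/2) * (x - u) = (s - (1/2) * (x - u)) - ((n:ℝ) - 1) := by
        rw [hs]; ring
      rw [e]
      exact hp
    have hIub : (9:ℝ)/16 ≤ ∫ x in u..(b:ℝ), min (max (g x - ((n:ℝ) - 1)) 0) 1 := by
      have h1 := ramp_right (1/2) (3/4) u (b:ℝ) (by norm_num) (by norm_num) (by
        have e : u + (3:ℝ)/4 / (1/2) = u + 3/2 := by norm_num
        rw [e]; linarith)
      have h2 := intervalIntegral.integral_mono_on (by linarith : u ≤ (b:ℝ))
        (((ramp_cont (1/2) (3/4) u)).intervalIntegrable _ _) (hint u (b:ℝ) huIcc hbIcc) hram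
      have e : ((3:ℝ)/4) ^ 2 / (2 * (1/2)) = 9/16 := by norm_num
      rw [e] at h1
      linarith
    have hIlow : 0 ≤ ∫ x in (0:ℝ)..u, min (max (g x - ((n:ℝ) - 1)) 0) 1 :=
      intervalIntegral.integral_nonneg hu0 (fun x _ => hφnn _)
    have hsplit := intervalIntegral.integral_add_adjacent_intervals
      (hint 0 u h0Icc huIcc) (hint u (b:ℝ) huIcc hbIcc)
    linarith
  · -- main case u ≥ 1/2
    obtain ⟨x₀, hx₀⟩ : ∃ x₀ : ℝ, x₀ = u - 1/2 := ⟨_, rfl⟩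
    have hx₀0 : 0 ≤ x₀ := by linarith
    have hx₀u : x₀ < u := by rw [hx₀]; linarith
    have hx₀Icc : x₀ ∈ Set.Icc (0:ℝ) (b:ℝ) := ⟨hx₀0, by linarith⟩
    obtain ⟨σ, hσdef⟩ : ∃ σ : ℝ, σ = 2 * (g x₀ - s) := ⟨_, rfl⟩
    have hgx₀ : g x₀ = s + σ / 2 := by rw [hσdef]; ring
    have hσle : σ ≤ 1/2 := by
      have hl := hlip x₀ hx₀Icc u huIcc
      rw [abs_of_nonpos (by linarith : x₀ - u ≤ 0)] at hl
      have h5 := le_abs_self (g x₀ - g u)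
      rw [hσdef]
      linarith [hgu.ge, hgu.le]
    have hux₀ : u - x₀ = 1/2 := by rw [hx₀]; ring
    have hkey := hconv.slope_mono_adjacent hx₀Icc hbIcc hx₀u hult
    have hslope : (g u - g x₀) / (u - x₀) = -σ := by
      rw [hux₀, hgu, hσdef]; ring
    rw [hslope, hb, hgu] at hkey
    have hbu0 : 0 < (b:ℝ) - u := by linarith
    have hσb : s ≤ σ * ((b:ℝ) - u) := by
      have := (le_div_iff₀ hbu0).mp hkey
      linarith
    have hσpos : 0 < σ := by nlinarith
    obtain ⟨c₁, hc₁⟩ : ∃ c₁ : ℝ, c₁ = 1/4 - σ/2 := ⟨_, rfl⟩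
    have hc₁0 : 0 ≤ c₁ := by rw [hc₁]; linarith
    -- piece 1
    have hP1pt : ∀ x ∈ Set.Icc (0:ℝ) x₀, 1 - max 0 (c₁ - σ * (x₀ - x))
        ≤ min (max (g x - ((n:ℝ) - 1)) 0) 1 := by
      intro x hx
      have hxIcc : x ∈ Set.Icc (0:ℝ) (b:ℝ) := ⟨hx.1, by linarith [hx.2]⟩
      have hgl : g x₀ + σ * (x₀ - x) ≤ g x := by
        rcases eq_or_lt_of_le hx.2 with he | hlt
        · rw [he]; simp
        · have hk := hconv.slope_mono_adjacent hxIcc huIcc hlt hx₀u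
          rw [hslope] at hk
          have hpos : 0 < x₀ - x := by linarith
          have := (div_le_iff₀ hpos).mp hk
          linarith
      have hnx : (n:ℝ) - g x ≤ c₁ - σ * (x₀ - x) := by
        have h8 := hgx₀
        rw [hs] at h8
        rw [hc₁]
        linarith
      have h6 : max 0 ((n:ℝ) - g x) ≤ max 0 (c₁ - σ * (x₀ - x)) :=
        max_le_max (le_refl 0) hnx
      have h7 := phi_ge_one_sub (g x) (n:ℝ)
      linarith
    have hP1 : x₀ - c₁ ^ 2 / (2 * σ) ≤ ∫ x in (0:ℝ)..x₀, min (max (g x - ((n:ℝ) - 1)) 0) 1 := by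
      have hlc : Continuous (fun x : ℝ => 1 - max 0 (c₁ - σ * (x₀ - x))) := by fun_prop
      have hmono := intervalIntegral.integral_mono_on hx₀0
        (hlc.intervalIntegrable _ _) (hint 0 x₀ h0Icc hx₀Icc) hP1pt
      have e : ∫ x in (0:ℝ)..x₀, (1 - max 0 (c₁ - σ * (x₀ - x)))
          = x₀ - ∫ x in (0:ℝ)..x₀, max 0 (c₁ - σ * (x₀ - x)) := by
        rw [intervalIntegral.integral_sub intervalIntegrable_const
          ((ramp_cont' σ c₁ x₀).intervalIntegrable _ _), intervalIntegral.integral_const]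
        simp [smul_eq_mul]
      rw [e] at hmono
      have hrl := ramp_left σ c₁ x₀ 0 hσpos hc₁0 hx₀0
      linarith
    -- piece 2
    have hP2pt : ∀ x ∈ Set.Icc x₀ u, max (3/4) (3/4 + σ/2 - (x - x₀)/2)
        ≤ min (max (g x - ((n:ℝ) - 1)) 0) 1 := by
      intro x hx
      have hxIcc : x ∈ Set.Icc (0:ℝ) (b:ℝ) := ⟨le_trans hx₀0 hx.1, le_trans hx.2 hub⟩
      have hgxs : s ≤ g x := hgu ▸ hanti hxIcc huIcc hx.2
      have hgxl : g x₀ - (x - x₀)/2 ≤ g x := by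
        have hl := hlip x₀ hx₀Icc x hxIcc
        rw [abs_of_nonpos (by linarith [hx.1] : x₀ - x ≤ 0)] at hl
        have h9 := le_abs_self (g x₀ - g x)
        linarith
      have hA : max 0 ((n:ℝ) - g x) ≤ 1/4 := by
        apply max_le (by norm_num)
        rw [hs] at hgxs; linarith
      have hB : max 0 ((n:ℝ) - g x) ≤ 1/4 - σ/2 + (x - x₀)/2 := by
        apply max_le (by linarith [hx.1])
        have h8 := hgx₀
        rw [hs] at h8
        linarith
      have h7 := phi_ge_one_sub (g x) (n:ℝ)
      apply max_le <;> linarith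
    have hP2int : ∫ x in x₀..u, max (3/4) (3/4 + σ/2 - (x - x₀)/2) = 3/8 + σ^2/4 := by
      have hxσ : x₀ ≤ x₀ + σ := by linarith
      have hσu : x₀ + σ ≤ u := by rw [hx₀]; linarith
      have hmc : Continuous (fun x : ℝ => max (3/4) (3/4 + σ/2 - (x - x₀)/2)) := by fun_prop
      rw [← intervalIntegral.integral_add_adjacent_intervals
        (hmc.intervalIntegrable x₀ (x₀ + σ)) (hmc.intervalIntegrable (x₀ + σ) u)]
      have e1 : ∫ x in x₀..(x₀ + σ), max (3/4) (3/4 + σ/2 - (x - x₀)/2)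
          = ∫ x in x₀..(x₀ + σ), ((3/4 + σ/2 + x₀/2) + (-(1/2)) * x) := by
        apply intervalIntegral.integral_congr
        intro x hx
        rw [Set.uIcc_of_le hxσ] at hx
        dsimp only
        rw [max_eq_right (by linarith [hx.2] : (3:ℝ)/4 ≤ 3/4 + σ/2 - (x - x₀)/2)]
        ring
      have e2 : ∫ x in (x₀ + σ)..u, max (3/4) (3/4 + σ/2 - (x - x₀)/2)
          = ∫ x in (x₀ + σ)..u, ((3:ℝ)/4) := by
        apply intervalIntegral.integral_congr
        intro x hx
        rw [Set.uIcc_of_le hσu] at hx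
        dsimp only
        rw [max_eq_left (by linarith [hx.1] : 3/4 + σ/2 - (x - x₀)/2 ≤ (3:ℝ)/4)]
      rw [e1, e2, lin_int, intervalIntegral.integral_const]
      rw [show u = x₀ + 1/2 by rw [hx₀]; ring]
      simp only [smul_eq_mul]
      ring
    have hP2 : 3/8 + σ^2/4 ≤ ∫ x in x₀..u, min (max (g x - ((n:ℝ) - 1)) 0) 1 := by
      have hmc : Continuous (fun x : ℝ => max (3/4) (3/4 + σ/2 - (x - x₀)/2)) := by fun_prop
      have h10 := intervalIntegral.integral_mono_on (by linarith : x₀ ≤ u)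
        (hmc.intervalIntegrable _ _) (hint x₀ u hx₀Icc huIcc) hP2pt
      rw [hP2int] at h10
      exact h10
    -- piece 3
    have hP3pt : ∀ x ∈ Set.Icc u (b:ℝ), max 0 (3/4 - σ * (x - u))
        ≤ min (max (g x - ((n:ℝ) - 1)) 0) 1 := by
      intro x hx
      have hxIcc : x ∈ Set.Icc (0:ℝ) (b:ℝ) := ⟨le_trans hu0 hx.1, hx.2⟩
      have hgxu : g x ≤ s := hgu ▸ hanti huIcc hxIcc hx.1
      have hgl : s - σ * (x - u) ≤ g x := by
        rcases eq_or_lt_of_le hx.1 with he | hlt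
        · rw [← he]; simp [hgu.ge]
        · have hk := hconv.slope_mono_adjacent hx₀Icc hxIcc hx₀u hlt
          rw [hslope] at hk
          have hpos : 0 < x - u := by linarith
          have := (le_div_iff₀ hpos).mp hk
          rw [hgu] at this
          linarith
      have hp := phi_ge (g x) (n:ℝ) (s - σ * (x - u)) hgl (by rw [hs] at hgxu; linarith)
      have e : (3:ℝ)/4 - σ * (x - u) = (s - σ * (x - u)) - ((n:ℝ) - 1) := by rw [hs]; ring
      rw [e]
      exact hp
    have hP3 : 9/(32*σ) ≤ ∫ x in u..(b:ℝ), min (max (g x - ((n:ℝ) - 1)) 0) 1 := by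
      have h1 := ramp_right σ (3/4) u (b:ℝ) hσpos (by norm_num) (by
        have h11 : (3:ℝ)/4 / σ ≤ (b:ℝ) - u := by
          rw [div_le_iff₀ hσpos]
          nlinarith
        linarith)
      have h2 := intervalIntegral.integral_mono_on (by linarith : u ≤ (b:ℝ))
        ((ramp_cont σ (3/4) u).intervalIntegrable _ _) (hint u (b:ℝ) huIcc hbIcc) hP3pt
      have e : ((3:ℝ)/4) ^ 2 / (2 * σ) = 9/(32*σ) := by
        rw [div_eq_div_iff (by positivity) (by positivity)]
        ring
      rw [e] at h1
      linarith
    -- assemble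
    have hsplit1 := intervalIntegral.integral_add_adjacent_intervals
      (hint 0 x₀ h0Icc hx₀Icc) (hint x₀ u hx₀Icc huIcc)
    have hsplit2 := intervalIntegral.integral_add_adjacent_intervals
      (hint 0 u h0Icc huIcc) (hint u (b:ℝ) huIcc hbIcc)
    have harith : c₁ ^ 2 / (2 * σ) + 1 ≤ 3/8 + σ^2/4 + 9/(32*σ) := by
      rw [← sub_nonneg]
      have e : 3/8 + σ^2/4 + 9/(32*σ) - (c₁ ^ 2 / (2 * σ) + 1)
          = (4 * (1 - 2*σ) * (2 - σ^2)) / (32 * σ) := by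
        rw [hc₁]
        field_simp
        ring
      rw [e]
      apply div_nonneg _ (by positivity)
      have h1 : (0:ℝ) ≤ 1 - 2*σ := by linarith
      have h2 : (0:ℝ) ≤ 2 - σ^2 := by nlinarith
      nlinarith [mul_nonneg h1 h2]
    linarith

set_option maxHeartbeats 1000000 in
theorem lattice_count_theorem
    (b : ℕ) (α : ℝ) (hα : α ∈ Set.Icc (0:ℝ) (1/2)) (g : ℝ → ℝ)
    (hnonneg : ∀ z ∈ Set.Icc (0:ℝ) (b:ℝ), 0 ≤ g z)
    (hanti : AntitoneOn g (Set.Icc (0:ℝ) (b:ℝ)))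
    (hconv : ConvexOn ℝ (Set.Icc (0:ℝ) (b:ℝ)) g)
    (hb : g (b:ℝ) = 0)
    (hlip : ∀ z ∈ Set.Icc (0:ℝ) (b:ℝ), ∀ w ∈ Set.Icc (0:ℝ) (b:ℝ),
      |g z - g w| ≤ (1/2) * |z - w|) :
    ((∑ m ∈ Finset.range b,
        (⌊g ((m:ℝ) + α) + 1/4⌋ + ⌊g ((m:ℝ) + (1 - α)) + 1/4⌋) : ℤ) : ℝ)
      ≤ 2 * ∫ z in (0:ℝ)..(b:ℝ), g z := by
  obtain ⟨hα0, hα2⟩ := hα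
  have hb0 : (0:ℝ) ≤ (b:ℝ) := Nat.cast_nonneg b
  have h0Icc : (0:ℝ) ∈ Set.Icc (0:ℝ) (b:ℝ) := ⟨le_refl _, hb0⟩
  have hgc : ContinuousOn g (Set.Icc (0:ℝ) (b:ℝ)) := by
    have hL : LipschitzOnWith (1/2 : NNReal) g (Set.Icc (0:ℝ) (b:ℝ)) := by
      rw [lipschitzOnWith_iff_dist_le_mul]
      intro x hx y hy
      rw [Real.dist_eq, Real.dist_eq]
      have := hlip x hx y hy
      calc |g x - g y| ≤ (1/2) * |x - y| := this
        _ = ((1/2 : NNReal) : ℝ) * |x - y| := by norm_num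
    exact hL.continuousOn
  have hmem : ∀ m ∈ Finset.range b, ∀ β : ℝ, 0 ≤ β → β ≤ 1 →
      ((m:ℝ) + β) ∈ Set.Icc (0:ℝ) (b:ℝ) := by
    intro m hm β h0 h1
    have hm0 : (0:ℝ) ≤ (m:ℝ) := Nat.cast_nonneg m
    have hmb : (m:ℝ) + 1 ≤ (b:ℝ) := by
      exact_mod_cast Nat.succ_le_of_lt (Finset.mem_range.mp hm)
    exact ⟨by linarith, by linarith⟩
  push_cast
  have step1 : ∀ m ∈ Finset.range b,
      ((⌊g ((m:ℝ) + α) + 1/4⌋ : ℤ) : ℝ) + ((⌊g ((m:ℝ) + (1 - α)) + 1/4⌋ : ℤ) : ℝ)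
      = ∑ n ∈ Finset.Icc 1 ((⌊g 0 + 1/4⌋).toNat),
          ((if (n:ℝ) - 1/4 ≤ g ((m:ℝ) + α) then (1:ℝ) else 0)
            + (if (n:ℝ) - 1/4 ≤ g ((m:ℝ) + (1 - α)) then (1:ℝ) else 0)) := by
    intro m hm
    have h1 := hmem m hm α hα0 (by linarith)
    have h2 := hmem m hm (1 - α) (by linarith) (by linarith)
    rw [Finset.sum_add_distrib,
      ← floor_eq_sum ((⌊g 0 + 1/4⌋).toNat) (g 0) _ (hnonneg _ h1) (hanti h0Icc h1 h1.1) rfl,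
      ← floor_eq_sum ((⌊g 0 + 1/4⌋).toNat) (g 0) _ (hnonneg _ h2) (hanti h0Icc h2 h2.1) rfl]
  rw [Finset.sum_congr rfl step1, Finset.sum_comm]
  have step2 : ∀ n ∈ Finset.Icc 1 ((⌊g 0 + 1/4⌋).toNat),
      (∑ m ∈ Finset.range b,
        ((if (n:ℝ) - 1/4 ≤ g ((m:ℝ) + α) then (1:ℝ) else 0)
          + (if (n:ℝ) - 1/4 ≤ g ((m:ℝ) + (1 - α)) then (1:ℝ) else 0)))
      ≤ 2 * ∫ x in (0:ℝ)..(b:ℝ), min (max (g x - ((n:ℝ) - 1)) 0) 1 := by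
    intro n hn
    obtain ⟨hn1, hnK⟩ := Finset.mem_Icc.mp hn
    have hng : (n:ℝ) - 1/4 ≤ g 0 := by
      have h1 : (n:ℤ) ≤ ⌊g 0 + 1/4⌋ := by omega
      have h2 := Int.le_floor.mp h1
      push_cast at h2
      linarith
    exact level_bound b α ⟨hα0, hα2⟩ g hnonneg hanti hconv hb hlip hgc n hn1 hng
  refine le_trans (Finset.sum_le_sum step2) ?_
  have hintn : ∀ n ∈ Finset.Icc 1 ((⌊g 0 + 1/4⌋).toNat),
      IntervalIntegrable (fun x => min (max (g x - ((n:ℝ) - 1)) 0) 1) volume 0 (b:ℝ) := by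
    intro n _
    apply ContinuousOn.intervalIntegrable
    have hφc : Continuous (fun y : ℝ => min (max (y - ((n:ℝ) - 1)) 0) 1) := by fun_prop
    have := hφc.comp_continuousOn hgc
    rwa [Set.uIcc_of_le hb0]
  rw [← Finset.mul_sum, ← intervalIntegral.integral_finset_sum hintn]
  have hgint : IntervalIntegrable g volume 0 (b:ℝ) := by
    apply ContinuousOn.intervalIntegrable
    rwa [Set.uIcc_of_le hb0]
  have hsumint : IntervalIntegrable
      (fun x => ∑ n ∈ Finset.Icc 1 ((⌊g 0 + 1/4⌋).toNat),
        min (max (g x - ((n:ℝ) - 1)) 0) 1) volume 0 (b:ℝ) := by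
    apply ContinuousOn.intervalIntegrable
    rw [Set.uIcc_of_le hb0]
    apply continuousOn_finset_sum
    intro n _
    have hφc : Continuous (fun y : ℝ => min (max (y - ((n:ℝ) - 1)) 0) 1) := by fun_prop
    exact hφc.comp_continuousOn hgc
  have hmono : (∫ x in (0:ℝ)..(b:ℝ), ∑ n ∈ Finset.Icc 1 ((⌊g 0 + 1/4⌋).toNat),
        min (max (g x - ((n:ℝ) - 1)) 0) 1)
      ≤ ∫ x in (0:ℝ)..(b:ℝ), g x := by
    apply intervalIntegral.integral_mono_on hb0 hsumint hgint
    intro x hx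
    exact clamp_sum_le _ _ (hnonneg x hx)
  linarith
end
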